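/- arXiv:2205.13831 — 5 statements merged into one kernel-verified Lean document; each statement's English description precedes it below -/
import Mathlib

section
/- Let k be a field of characteristic 2 and let ι be a k-algebra automorphism of k⟦u⟧ with ι∘ι = id, such that ι(u) = u + a for some a ∈ k⟦u⟧ with u-adic valuation v_u(a) = 2^h, where h ≥ 1. Set x = u·ι(u). Then a lies in the subring k⟦x⟧ of k⟦u⟧, the x-adic valuation of a (as an element of k⟦x⟧) equals 2^{h−1}, and u satisfies u² + a·u + x = 0. -/
open PowerSeries

/-- Substitution of a power series `b` into a power series `x` of positive order:
the `m`-th coefficient of `b(x)` is `∑_{n ≤ m} bₙ · coeff_m(xⁿ)` (the terms with `n > m`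
vanish when `x` has positive order). -/
noncomputable def substPS {k : Type*} [CommRing k] (x b : PowerSeries k) : PowerSeries k :=
  PowerSeries.mk fun m =>
    ∑ n ∈ Finset.range (m + 1), PowerSeries.coeff (R := k) n b * PowerSeries.coeff (R := k) m (x ^ n)

section Aux
variable {k : Type*} [Field k]

lemma sum_range_two_mul (N : ℕ) (F : ℕ → k) :
    ∑ j ∈ Finset.range (2 * N), F j =
      ∑ n ∈ Finset.range N, F (2 * n) + ∑ n ∈ Finset.range N, F (2 * n + 1) := by
  induction N with
  | zero => simp
  | succ N ih =>
    have h : 2 * (N + 1) = (2 * N + 1) + 1 := by ring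
    rw [h, Finset.sum_range_succ, Finset.sum_range_succ, ih, Finset.sum_range_succ,
      Finset.sum_range_succ]
    ring

/-- coefficients of the decomposition, by strong recursion -/
noncomputable def gfun (f w : PowerSeries k) : ℕ → k
  | m => PowerSeries.coeff (R := k) m f -
      ∑ j ∈ (Finset.range m).attach,
        gfun f w j.1 * PowerSeries.coeff (R := k) (m - j.1) (w ^ (j.1 / 2))
  decreasing_by exact Finset.mem_range.mp j.2

lemma gfun_spec (f w : PowerSeries k) (hw : constantCoeff (R := k) w = 1) (m : ℕ) :
    PowerSeries.coeff (R := k) m f =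
      ∑ j ∈ Finset.range (m + 1), gfun f w j * PowerSeries.coeff (R := k) (m - j) (w ^ (j / 2)) := by
  rw [Finset.sum_range_succ, Nat.sub_self]
  have h1 : PowerSeries.coeff (R := k) 0 (w ^ (m / 2)) = 1 := by
    rw [coeff_zero_eq_constantCoeff, map_pow, hw, one_pow]
  rw [h1, mul_one, gfun, Finset.sum_attach (Finset.range m)
    (fun j => gfun f w j * PowerSeries.coeff (R := k) (m - j) (w ^ (j / 2)))]
  ring

end Aux

section Aux2
variable {k : Type*} [Field k]

lemma coeff_xpow (w : PowerSeries k) (m n : ℕ) :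
    PowerSeries.coeff (R := k) m ((X ^ 2 * w) ^ n) =
      if 2 * n ≤ m then PowerSeries.coeff (R := k) (m - 2 * n) (w ^ n) else 0 := by
  rw [mul_pow, ← pow_mul, coeff_X_pow_mul']

lemma coeff_xpow_mul_X (w : PowerSeries k) (m n : ℕ) :
    PowerSeries.coeff (R := k) m ((X ^ 2 * w) ^ n * X) =
      if 2 * n + 1 ≤ m then PowerSeries.coeff (R := k) (m - (2 * n + 1)) (w ^ n) else 0 := by
  cases m with
  | zero => rw [coeff_zero_mul_X, if_neg (by omega)]
  | succ m' =>
    rw [coeff_succ_mul_X, coeff_xpow,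
      show m' + 1 - (2 * n + 1) = m' - 2 * n from by omega]
    exact (if_congr (by omega) rfl rfl).symm

lemma coeff_substPS (x b : PowerSeries k) (m : ℕ) :
    PowerSeries.coeff (R := k) m (substPS x b) =
      ∑ n ∈ Finset.range (m + 1),
        PowerSeries.coeff (R := k) n b * PowerSeries.coeff (R := k) m (x ^ n) := by
  simp [substPS]

lemma coeff_substPS_mul_X (w b : PowerSeries k) (m : ℕ) :
    PowerSeries.coeff (R := k) m (substPS (X ^ 2 * w) b * X) =
      ∑ n ∈ Finset.range (m + 1),
        PowerSeries.coeff (R := k) n b * PowerSeries.coeff (R := k) m ((X ^ 2 * w) ^ n * X) := by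
  cases m with
  | zero =>
    rw [coeff_zero_mul_X,
      Finset.sum_congr rfl (fun n _ => by rw [coeff_zero_mul_X, mul_zero])]
    simp
  | succ m' =>
    rw [coeff_succ_mul_X, coeff_substPS]
    conv_rhs => rw [Finset.sum_range_succ]
    have h1 : ∀ n ∈ Finset.range (m' + 1),
        PowerSeries.coeff (R := k) n b * PowerSeries.coeff (R := k) (m' + 1) ((X ^ 2 * w) ^ n * X) =
          PowerSeries.coeff (R := k) n b * PowerSeries.coeff (R := k) m' ((X ^ 2 * w) ^ n) :=
      fun n _ => by rw [coeff_succ_mul_X]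
    rw [Finset.sum_congr rfl h1, coeff_succ_mul_X, coeff_xpow, if_neg (by omega),
      mul_zero, add_zero]

lemma decomp (f w : PowerSeries k) (hw : constantCoeff (R := k) w = 1) :
    f = substPS (X ^ 2 * w) (PowerSeries.mk fun n => gfun f w (2 * n)) +
        substPS (X ^ 2 * w) (PowerSeries.mk fun n => gfun f w (2 * n + 1)) * X := by
  ext m
  rw [map_add, coeff_substPS, coeff_substPS_mul_X, gfun_spec f w hw m]
  have key : ∀ j ∈ Finset.range (m + 1),
      gfun f w j * PowerSeries.coeff (R := k) (m - j) (w ^ (j / 2)) =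
        gfun f w j * (if j ≤ m then PowerSeries.coeff (R := k) (m - j) (w ^ (j / 2)) else 0) := by
    intro j hj
    rw [if_pos (Nat.lt_succ_iff.mp (Finset.mem_range.mp hj))]
  rw [Finset.sum_congr rfl key]
  have hsub : Finset.range (m + 1) ⊆ Finset.range (2 * (m + 1)) :=
    Finset.range_subset_range.mpr (by omega)
  have hzero : ∀ j ∈ Finset.range (2 * (m + 1)), j ∉ Finset.range (m + 1) →
      gfun f w j * (if j ≤ m then PowerSeries.coeff (R := k) (m - j) (w ^ (j / 2)) else 0) = 0 := by
    intro j _ hj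
    have hjm : m + 1 ≤ j := by
      by_contra hc
      exact hj (Finset.mem_range.mpr (by omega))
    rw [if_neg (by omega), mul_zero]
  rw [Finset.sum_subset hsub hzero, sum_range_two_mul]
  congr 1
  · apply Finset.sum_congr rfl
    intro n _
    rw [coeff_mk, coeff_xpow, show 2 * n / 2 = n from by omega]
  · apply Finset.sum_congr rfl
    intro n _
    rw [coeff_mk, coeff_xpow_mul_X, show (2 * n + 1) / 2 = n from by omega]

end Aux2

section Aux3
variable {k : Type*} [Field k]

lemma substPS_fixed (x : PowerSeries k) (ι : PowerSeries k ≃ₐ[k] PowerSeries k)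
    (hx2 : ∀ m n : ℕ, m < 2 * n → PowerSeries.coeff (R := k) m (x ^ n) = 0)
    (hXdvd : (X : PowerSeries k) ∣ ι X) (hxfix : ι x = x) (b : PowerSeries k) :
    ι (substPS x b) = substPS x b := by
  ext m
  set P : PowerSeries k :=
    ∑ n ∈ Finset.range (m + 1), C (R := k) (PowerSeries.coeff (R := k) n b) * x ^ n with hPdef
  have hP : ∀ j, j ≤ m → PowerSeries.coeff (R := k) j P = PowerSeries.coeff (R := k) j (substPS x b) := by
    intro j hj
    rw [coeff_substPS, hPdef, map_sum]
    have h1 : ∀ n ∈ Finset.range (m + 1),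
        PowerSeries.coeff (R := k) j (C (R := k) (PowerSeries.coeff (R := k) n b) * x ^ n) =
          PowerSeries.coeff (R := k) n b * PowerSeries.coeff (R := k) j (x ^ n) :=
      fun n _ => by rw [coeff_C_mul]
    rw [Finset.sum_congr rfl h1]
    have hsub : Finset.range (j + 1) ⊆ Finset.range (m + 1) :=
      Finset.range_subset_range.mpr (by omega)
    refine (Finset.sum_subset hsub ?_).symm
    intro n _ hn
    have : j + 1 ≤ n := by
      by_contra hc
      exact hn (Finset.mem_range.mpr (by omega))
    rw [hx2 j n (by omega), mul_zero]
  have hdvd : (X : PowerSeries k) ^ (m + 1) ∣ (substPS x b - P) := by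
    rw [X_pow_dvd_iff]
    intro j hj
    rw [map_sub, hP j (by omega), sub_self]
  obtain ⟨t, ht⟩ := hdvd
  have hsplit : substPS x b = P + X ^ (m + 1) * t := by rw [← ht]; ring
  have hιP : ι P = P := by
    rw [hPdef, map_sum]
    refine Finset.sum_congr rfl fun n _ => ?_
    rw [map_mul, map_pow, hxfix, C_eq_algebraMap, AlgEquiv.commutes]
  obtain ⟨s, hs⟩ := hXdvd
  have hcoefftail : ∀ u : PowerSeries k, PowerSeries.coeff (R := k) m (X ^ (m + 1) * u) = 0 :=
    fun u => by rw [coeff_X_pow_mul', if_neg (by omega)]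
  rw [hsplit, map_add, map_mul, map_pow, hs, map_add, hιP]
  rw [show (X * s) ^ (m + 1) * ι t = X ^ (m + 1) * (s ^ (m + 1) * ι t) from by ring]
  rw [hcoefftail, map_add, hcoefftail]

lemma substPS_zero (x : PowerSeries k) : substPS x 0 = 0 := by
  ext m
  simp [substPS]

lemma order_substPS (w b : PowerSeries k) (hw : constantCoeff (R := k) w = 1) (N : ℕ)
    (hN : b.order = N) : (substPS (X ^ 2 * w) b).order = (2 * N : ℕ) := by
  obtain ⟨hN1, hN2⟩ := PowerSeries.order_eq_nat.mp hN
  rw [PowerSeries.order_eq_nat]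
  constructor
  · rw [coeff_substPS, Finset.sum_eq_single N]
    · rw [coeff_xpow, if_pos (by omega), Nat.sub_self, coeff_zero_eq_constantCoeff,
        map_pow, hw, one_pow, mul_one]
      exact hN1
    · intro n _ hn
      rcases lt_or_gt_of_ne hn with h | h
      · rw [hN2 n h, zero_mul]
      · rw [coeff_xpow, if_neg (by omega), mul_zero]
    · intro hmem
      exact absurd (Finset.mem_range.mpr (by omega)) hmem
  · intro i hi
    rw [coeff_substPS]
    refine Finset.sum_eq_zero fun n _ => ?_
    by_cases h : n < N
    · rw [hN2 n h, zero_mul]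
    · rw [coeff_xpow, if_neg (by omega), mul_zero]

end Aux3


/-- Let `k` be a field of characteristic 2 and `ι` a `k`-algebra involution of `k⟦u⟧` with
`ι(u) = u + a` where `v_u(a) = 2^h`, `h ≥ 1`.  Set `x = u·ι(u)`.  Then `a` lies in the
subring `k⟦x⟧` (i.e. `a = b(x)` for some `b ∈ k⟦x⟧`), the `x`-adic valuation of `a` is
`2^(h-1)`, and `u² + a·u + x = 0`. -/
theorem stmt_4 (k : Type*) [Field k] [CharP k 2]
    (ι : PowerSeries k ≃ₐ[k] PowerSeries k) (hinv : ∀ f, ι (ι f) = f)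
    (a : PowerSeries k) (h : ℕ) (hh : 1 ≤ h)
    (hX : ι (X : PowerSeries k) = X + a)
    (ha : a.order = (2 ^ h : ℕ)) :
    (∃ b : PowerSeries k,
        a = substPS (X * ι (X : PowerSeries k)) b ∧ b.order = (2 ^ (h - 1) : ℕ)) ∧
      X ^ 2 + a * X + X * ι (X : PowerSeries k) = 0 := by
  have h2 : (2 : PowerSeries k) = 0 := by
    rw [← map_ofNat (C (R := k)) 2, show (2 : k) = 0 from by exact_mod_cast CharP.cast_eq_zero k 2,
      map_zero]
  have ha0 : a ≠ 0 := by
    intro h0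
    rw [h0, PowerSeries.order_zero] at ha
    exact (ENat.top_ne_coe _) ha
  -- a is divisible by X^2
  have hdvd2 : (X : PowerSeries k) ^ 2 ∣ a := by
    rw [X_pow_dvd_iff]
    intro j hj
    apply PowerSeries.coeff_of_lt_order
    rw [ha, Nat.cast_lt]
    have : 2 ≤ 2 ^ h := by
      calc 2 = 2 ^ 1 := by norm_num
      _ ≤ 2 ^ h := Nat.pow_le_pow_right (by norm_num) hh
    omega
  obtain ⟨d, hd⟩ := hdvd2
  set w : PowerSeries k := 1 + d * X with hwdef
  have hw : constantCoeff (R := k) w = 1 := by simp [hwdef]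
  have hx : X * ι (X : PowerSeries k) = X ^ 2 * w := by rw [hX, hd, hwdef]; ring
  -- second conjunct
  have conj2 : (X : PowerSeries k) ^ 2 + a * X + X * ι (X : PowerSeries k) = 0 := by
    rw [hX]
    linear_combination (X ^ 2 + a * X : PowerSeries k) * h2
  refine ⟨?_, conj2⟩
  -- ι fixes a
  have haa : a + a = 0 := by linear_combination (a : PowerSeries k) * h2
  have hιa : ι a = a := by
    have h3 := hinv X
    rw [hX, map_add, hX] at h3
    linear_combination h3 - haa
  -- X divides ι X
  have hXdvd : (X : PowerSeries k) ∣ ι X := ⟨1 + X * d, by rw [hX, hd]; ring⟩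
  -- ι fixes x
  have hxfix : ι (X * ι (X : PowerSeries k)) = X * ι (X : PowerSeries k) := by
    rw [map_mul, hinv, mul_comm]
  have hx2 : ∀ m n : ℕ, m < 2 * n →
      PowerSeries.coeff (R := k) m ((X * ι (X : PowerSeries k)) ^ n) = 0 := by
    intro m n hmn
    rw [hx, coeff_xpow, if_neg (by omega)]
  -- decomposition of a
  set b₀ : PowerSeries k := PowerSeries.mk fun n => gfun a w (2 * n) with hb₀
  set b₁ : PowerSeries k := PowerSeries.mk fun n => gfun a w (2 * n + 1) with hb₁
  have hdec : a = substPS (X * ι (X : PowerSeries k)) b₀ +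
      substPS (X * ι (X : PowerSeries k)) b₁ * X := by
    rw [hx]; exact decomp a w hw
  set S₀ := substPS (X * ι (X : PowerSeries k)) b₀ with hS₀
  set S₁ := substPS (X * ι (X : PowerSeries k)) b₁ with hS₁
  have hιS₀ : ι S₀ = S₀ := substPS_fixed _ ι hx2 hXdvd hxfix b₀
  have hιS₁ : ι S₁ = S₁ := substPS_fixed _ ι hx2 hXdvd hxfix b₁
  have hdec2 : a = S₀ + S₁ * (X + a) := by
    conv_lhs => rw [← hιa, hdec, map_add, map_mul, hιS₀, hιS₁, hX]
  have hS₁0 : S₁ = 0 := by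
    have hma : S₁ * a = 0 := by linear_combination hdec2 - hdec + S₁ * a * h2
    rcases mul_eq_zero.mp hma with h' | h'
    · exact h'
    · exact absurd h' ha0
  have hfinal : a = S₀ := by rw [hdec, hS₁0, zero_mul, add_zero]
  refine ⟨b₀, hfinal, ?_⟩
  -- order computation
  have hb₀0 : b₀ ≠ 0 := by
    intro h0
    apply ha0
    rw [hfinal, hS₀, h0, substPS_zero]
  obtain ⟨N, hN⟩ : ∃ N : ℕ, b₀.order = N := by
    have := PowerSeries.order_finite_iff_ne_zero.mpr hb₀0
    lift b₀.order to ℕ using this.ne with N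
    exact ⟨N, rfl⟩
  have horder : a.order = (2 * N : ℕ) := by
    rw [hfinal, hS₀, hx]
    exact order_substPS w b₀ hw N hN
  have h2N : 2 * N = 2 ^ h := by
    have := horder.symm.trans ha
    exact_mod_cast this
  have hNval : N = 2 ^ (h - 1) := by
    have hpow : 2 ^ h = 2 * 2 ^ (h - 1) := by
      rw [← pow_succ']
      congr 1
      omega
    omega
  rw [hN, hNval]
end

section
/- Let k be a field of characteristic 2 and ι a continuous k-algebra involution of k⟦u⟧ with ι(u) = u + a where a ∈ (u²). Then k⟦u⟧ is a free module of rank 2 over the subring k⟦x⟧, where x = u·ι(u), with basis {1, u}. -/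
open PowerSeries

/-- Splitting a sum `∑_{n ≤ m} t n` when `t n = 0` for `2n > m`. -/
lemma sumSplitAux {k : Type*} [CommRing k] (m : ℕ) (t : ℕ → k)
    (h0 : ∀ n, m < 2 * n → t n = 0) :
    ∑ n ∈ Finset.range (m + 1), t n =
      (∑ n ∈ Finset.range ((m + 1) / 2), t n) + (if Even m then t (m / 2) else 0) := by
  rw [← Finset.sum_range_add_sum_Ico t (show (m + 1) / 2 ≤ m + 1 by omega)]
  congr 1
  by_cases h : Even m
  · have hm : m % 2 = 0 := Nat.even_iff.mp h
    rw [if_pos h]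
    exact Finset.sum_eq_single_of_mem (m / 2)
      (Finset.mem_Ico.mpr ⟨by omega, by omega⟩)
      (fun n hn hne => h0 n (by have := Finset.mem_Ico.mp hn; omega))
  · have hm : m % 2 = 1 := Nat.not_even_iff.mp h
    rw [if_neg h]
    exact Finset.sum_eq_zero fun n hn =>
      h0 n (by have := Finset.mem_Ico.mp hn; omega)

/-- The recursively defined solution of the triangular system of coefficient equations. -/
noncomputable def solFun {k : Type*} [CommRing k] (g : ℕ → k) (c : ℕ → ℕ → k) : ℕ → k
  | m => g m
      - ∑ n ∈ (Finset.range ((m + 1) / 2)).attach, solFun g c (2 * n.1) * c m n.1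
      - ∑ n ∈ (Finset.range (m / 2)).attach, solFun g c (2 * n.1 + 1) * c (m - 1) n.1
  decreasing_by
  · have := Finset.mem_range.mp n.2; omega
  · have := Finset.mem_range.mp n.2; omega

lemma solFun_spec {k : Type*} [CommRing k] (g : ℕ → k) (c : ℕ → ℕ → k) (m : ℕ) :
    solFun g c m = g m
      - ∑ n ∈ Finset.range ((m + 1) / 2), solFun g c (2 * n) * c m n
      - ∑ n ∈ Finset.range (m / 2), solFun g c (2 * n + 1) * c (m - 1) n := by
  rw [solFun]
  rw [Finset.sum_attach (Finset.range ((m + 1) / 2)) (fun n => solFun g c (2 * n) * c m n),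
    Finset.sum_attach (Finset.range (m / 2)) (fun n => solFun g c (2 * n + 1) * c (m - 1) n)]

theorem keyAux {k : Type*} [CommRing k] (x : PowerSeries k)
    (hz : ∀ m n, m < 2 * n → PowerSeries.coeff (R := k) m (x ^ n) = 0)
    (hd : ∀ n, PowerSeries.coeff (R := k) (2 * n) (x ^ n) = 1) (f : PowerSeries k) :
    ∃! b : PowerSeries k × PowerSeries k,
      f = substPS x b.1 + substPS x b.2 * X := by
  classical
  set g : ℕ → k := fun m => PowerSeries.coeff (R := k) m f with hg
  set c : ℕ → ℕ → k := fun m n => PowerSeries.coeff (R := k) m (x ^ n) with hcdef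
  set s : ℕ → k := solFun g c with hs
  -- interleaved coefficients of a pair
  set wb : PowerSeries k × PowerSeries k → ℕ → k := fun b j =>
    if Even j then PowerSeries.coeff (R := k) (j / 2) b.1 else PowerSeries.coeff (R := k) (j / 2) b.2
    with hwb
  have wb_even : ∀ b n, wb b (2 * n) = PowerSeries.coeff (R := k) n b.1 := by
    intro b n
    have h : Even (2 * n) := even_two_mul n
    rw [hwb]
    simp only [if_pos h]
    rw [show 2 * n / 2 = n by omega]
  have wb_odd : ∀ b n, wb b (2 * n + 1) = PowerSeries.coeff (R := k) n b.2 := by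
    intro b n
    have h : ¬ Even (2 * n + 1) := by
      rw [Nat.not_even_iff]; omega
    rw [hwb]
    simp only [if_neg h]
    rw [show (2 * n + 1) / 2 = n by omega]
  have splitA : ∀ (p : PowerSeries k) m, PowerSeries.coeff (R := k) m (substPS x p) =
      (∑ n ∈ Finset.range ((m + 1) / 2), PowerSeries.coeff (R := k) n p * c m n)
        + (if Even m then PowerSeries.coeff (R := k) (m / 2) p else 0) := by
    intro p m
    rw [substPS, coeff_mk]
    rw [sumSplitAux m _ (fun n hn => by
      rw [hz m n hn, mul_zero])]
    congr 1
    split_ifs with h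
    · obtain ⟨i, hi⟩ := h
      subst hi
      have h1 : (i + i) / 2 = i := by omega
      rw [h1, show i + i = 2 * i from by ring, hd, mul_one]
    · rfl
  have Ekey : ∀ (b : PowerSeries k × PowerSeries k) m,
      PowerSeries.coeff (R := k) m (substPS x b.1 + substPS x b.2 * X) =
        wb b m + (∑ n ∈ Finset.range ((m + 1) / 2), wb b (2 * n) * c m n)
          + ∑ n ∈ Finset.range (m / 2), wb b (2 * n + 1) * c (m - 1) n := by
    intro b m
    have s1 : ∑ n ∈ Finset.range ((m + 1) / 2), wb b (2 * n) * c m n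
        = ∑ n ∈ Finset.range ((m + 1) / 2), PowerSeries.coeff (R := k) n b.1 * c m n :=
      Finset.sum_congr rfl fun n _ => by rw [wb_even]
    have s2 : ∑ n ∈ Finset.range (m / 2), wb b (2 * n + 1) * c (m - 1) n
        = ∑ n ∈ Finset.range (m / 2), PowerSeries.coeff (R := k) n b.2 * c (m - 1) n :=
      Finset.sum_congr rfl fun n _ => by rw [wb_odd]
    rw [map_add, s1, s2, splitA b.1 m]
    rcases m with _ | j
    · rw [coeff_zero_mul_X]
      simp [hwb]
    · rw [coeff_succ_mul_X, splitA b.2 j]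
      have hr : (j + 1 + 1) / 2 = (j + 1 + 1) / 2 := rfl
      have hr2 : (j + 1) / 2 = (j + 1) / 2 := rfl
      have hsub : (j + 1) - 1 = j := rfl
      rw [hsub]
      by_cases hj : Even j
      · have hj1 : ¬ Even (j + 1) := by
          rw [Nat.not_even_iff]; have := Nat.even_iff.mp hj; omega
        have hw : wb b (j + 1) = PowerSeries.coeff (R := k) (j / 2) b.2 := by
          rw [hwb]
          simp only [if_neg hj1]
          rw [show (j + 1) / 2 = j / 2 by have := Nat.even_iff.mp hj; omega]
        rw [if_neg hj1, if_pos hj, hw]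
        ring
      · have hj1 : Even (j + 1) := by
          rw [Nat.even_add_one]; exact hj
        have hw : wb b (j + 1) = PowerSeries.coeff (R := k) ((j + 1) / 2) b.1 := by
          rw [hwb]; simp only [if_pos hj1]
        rw [if_pos hj1, if_neg hj, hw]
        ring
  have main : ∀ b : PowerSeries k × PowerSeries k,
      (f = substPS x b.1 + substPS x b.2 * X) ↔ ∀ j, wb b j = s j := by
    intro b
    constructor
    · intro hb j
      induction j using Nat.strong_induction_on with
      | _ j ih =>
        have h1 : g j = wb b j + (∑ n ∈ Finset.range ((j + 1) / 2), wb b (2 * n) * c j n)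
            + ∑ n ∈ Finset.range (j / 2), wb b (2 * n + 1) * c (j - 1) n := by
          rw [hg]; rw [hb] at *; exact Ekey b j
        have e1 : ∑ n ∈ Finset.range ((j + 1) / 2), s (2 * n) * c j n
            = ∑ n ∈ Finset.range ((j + 1) / 2), wb b (2 * n) * c j n :=
          Finset.sum_congr rfl fun n hn => by
            rw [← ih (2 * n) (by have := Finset.mem_range.mp hn; omega)]
        have e2 : ∑ n ∈ Finset.range (j / 2), s (2 * n + 1) * c (j - 1) n
            = ∑ n ∈ Finset.range (j / 2), wb b (2 * n + 1) * c (j - 1) n :=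
          Finset.sum_congr rfl fun n hn => by
            rw [← ih (2 * n + 1) (by have := Finset.mem_range.mp hn; omega)]
        rw [hs, solFun_spec, ← hs, e1, e2, h1]
        ring
    · intro hw
      ext m
      rw [Ekey b m, hw m]
      have e1 : ∑ n ∈ Finset.range ((m + 1) / 2), wb b (2 * n) * c m n
          = ∑ n ∈ Finset.range ((m + 1) / 2), s (2 * n) * c m n :=
        Finset.sum_congr rfl fun n _ => by rw [hw]
      have e2 : ∑ n ∈ Finset.range (m / 2), wb b (2 * n + 1) * c (m - 1) n
          = ∑ n ∈ Finset.range (m / 2), s (2 * n + 1) * c (m - 1) n :=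
        Finset.sum_congr rfl fun n _ => by rw [hw]
      rw [e1, e2, hs, solFun_spec, ← hs]
      ring
  refine ⟨(PowerSeries.mk fun n => s (2 * n), PowerSeries.mk fun n => s (2 * n + 1)), ?_, ?_⟩
  · refine (main _).mpr ?_
    intro j
    rw [hwb]
    by_cases h : Even j
    · simp only [if_pos h, coeff_mk]
      rw [show 2 * (j / 2) = j by have := Nat.even_iff.mp h; omega]
    · simp only [if_neg h, coeff_mk]
      rw [show 2 * (j / 2) + 1 = j by have := Nat.not_even_iff.mp h; omega]
  · intro b' hb'
    have hw' := (main b').mp hb'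
    have h1 : b'.1 = PowerSeries.mk fun n => s (2 * n) := by
      ext n
      rw [coeff_mk, ← hw' (2 * n), wb_even]
    have h2 : b'.2 = PowerSeries.mk fun n => s (2 * n + 1) := by
      ext n
      rw [coeff_mk, ← hw' (2 * n + 1), wb_odd]
    exact Prod.ext h1 h2

/-- Let `k` be a field of characteristic 2 and `ι` a `k`-algebra involution of `k⟦u⟧` with
`ι(u) = u + a`, `a ∈ (u²)`.  Then `k⟦u⟧` is free of rank 2 over the subring
`k⟦x⟧`, `x = u·ι(u)`, with basis `{1, u}`: every `f ∈ k⟦u⟧` is uniquely of the form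
`b₀(x) + b₁(x)·u` with `b₀, b₁ ∈ k⟦x⟧`. -/
theorem stmt_5 (k : Type*) [Field k] [CharP k 2]
    (ι : PowerSeries k ≃ₐ[k] PowerSeries k) (hinv : ∀ f, ι (ι f) = f)
    (a : PowerSeries k)
    (ha : a ∈ Ideal.span ({X ^ 2} : Set (PowerSeries k)))
    (hX : ι (X : PowerSeries k) = X + a) :
    ∀ f : PowerSeries k, ∃! b : PowerSeries k × PowerSeries k,
      f = substPS (X * ι (X : PowerSeries k)) b.1
            + substPS (X * ι (X : PowerSeries k)) b.2 * X := by
  obtain ⟨cps, hc⟩ := Ideal.mem_span_singleton.mp ha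
  have hx : X * ι (X : PowerSeries k) = X ^ 2 * (1 + X * cps) := by
    rw [hX, hc]; ring
  have hz : ∀ m n, m < 2 * n → PowerSeries.coeff (R := k) m ((X * ι (X : PowerSeries k)) ^ n) = 0 := by
    intro m n hmn
    rw [hx, mul_pow, ← pow_mul, coeff_X_pow_mul', if_neg (by omega)]
  have hd : ∀ n, PowerSeries.coeff (R := k) (2 * n) ((X * ι (X : PowerSeries k)) ^ n) = 1 := by
    intro n
    rw [hx, mul_pow, ← pow_mul, coeff_X_pow_mul', if_pos (le_refl (2 * n)), Nat.sub_self]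
    rw [coeff_zero_eq_constantCoeff, map_pow, map_add, map_one, map_mul,
      constantCoeff_X, zero_mul, add_zero, one_pow]
  exact fun f => keyAux (X * ι (X : PowerSeries k)) hz hd f
end

section
/- Let G be a subgroup of GL₂(𝔽₂) × GL₂(𝔽₂), acting on the 8-element 𝔽₂-vector space M = M₂(𝔽₂) of 2×2 matrices by (A,B)·X = A X B⁻¹. Then H¹(G, M) = 0. -/
open Matrix

/-- The representation of `GL₂(𝔽₂) × GL₂(𝔽₂)` on the space `M₂(𝔽₂)` of `2×2` matrices
given by `(A, B)·X = A X B⁻¹`. -/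
def glRep : Representation (ZMod 2)
    (GL (Fin 2) (ZMod 2) × GL (Fin 2) (ZMod 2)) (Matrix (Fin 2) (Fin 2) (ZMod 2)) where
  toFun g :=
    { toFun := fun M => (g.1 : Matrix (Fin 2) (Fin 2) (ZMod 2)) * M *
        ((g.2⁻¹ : GL (Fin 2) (ZMod 2)) : Matrix (Fin 2) (Fin 2) (ZMod 2))
      map_add' := fun M N => by simp only [Matrix.mul_add, Matrix.add_mul]
      map_smul' := fun c M => by
        simp [Matrix.mul_smul, Matrix.smul_mul] }
  map_one' := by
    apply LinearMap.ext
    intro M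
    simp
  map_mul' := by
    intro g h
    apply LinearMap.ext
    intro M
    show _ = (g.1 : Matrix (Fin 2) (Fin 2) (ZMod 2)) *
        ((h.1 : Matrix (Fin 2) (Fin 2) (ZMod 2)) * M *
          ((h.2⁻¹ : GL (Fin 2) (ZMod 2)) : Matrix (Fin 2) (Fin 2) (ZMod 2))) *
        ((g.2⁻¹ : GL (Fin 2) (ZMod 2)) : Matrix (Fin 2) (Fin 2) (ZMod 2))
    simp [Prod.fst_mul, Prod.snd_mul, _root_.mul_inv_rev, Units.val_mul, mul_assoc]

/- ### Auxiliary material -/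

section Char2

variable {M : Type*} [AddCommGroup M] [Module (ZMod 2) M]

lemma char2_add_self (x : M) : x + x = 0 := by
  have h := two_smul (ZMod 2) x
  rw [show (2 : ZMod 2) = 0 by decide, zero_smul] at h
  exact h.symm

lemma char2_neg (x : M) : -x = x := neg_eq_of_add_eq_zero_right (char2_add_self x)

lemma char2_sub (x y : M) : x - y = x + y := by
  rw [sub_eq_add_neg, char2_neg]

lemma char2_eq_of_add_eq_zero {x y : M} (h : x + y = 0) : x = y := by
  have h2 := neg_eq_of_add_eq_zero_right h
  rw [char2_neg] at h2
  exact h2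

lemma char2_nsmul_self (x : M) : (2 : ℕ) • x = 0 := by
  rw [two_nsmul]; exact char2_add_self x

lemma char2_zsmul_self (x : M) : (2 : ℤ) • x = 0 := by
  rw [two_zsmul]; exact char2_add_self x

lemma char2_odd_nsmul {n : ℕ} (h : Odd n) (x : M) : n • x = x := by
  obtain ⟨k, rfl⟩ := h
  rw [add_nsmul, one_nsmul, mul_comm, mul_nsmul, char2_nsmul_self]
  simp

end Char2

/-- The corestriction-restriction argument in characteristic 2: if a 1-cocycle on a
finite group is a coboundary on a subgroup of odd index, it is a coboundary. -/
lemma cores {Γ : Type} [Group Γ] [Finite Γ] (A : Rep (ZMod 2) Γ) (P : Subgroup Γ)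
    (hodd : Odd P.index) (f : Γ → A)
    (hf : ∀ g h, f (g * h) = A.ρ g (f h) + f g)
    (m₀ : A) (hm₀ : ∀ p ∈ P, f p = A.ρ p m₀ + m₀) :
    ∃ m : A, ∀ g, f g = A.ρ g m + m := by
  classical
  letI : Fintype (Γ ⧸ P) := Fintype.ofFinite _
  set F : Γ → A := fun g => f g + (A.ρ g m₀ + m₀) with hFdef
  have hρmul : ∀ (g h : Γ) (x : A), A.ρ g (A.ρ h x) = A.ρ (g * h) x := by
    intro g h x; rw [_root_.map_mul]; rfl
  have hF : ∀ g h, F (g * h) = A.ρ g (F h) + F g := by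
    intro g h
    simp only [hFdef, map_add, hf, hρmul]
    abel_nf
    simp [char2_nsmul_self, char2_zsmul_self]
  have hF0 : ∀ p ∈ P, F p = 0 := by
    intro p hp
    simp only [hFdef, hm₀ p hp]
    abel_nf
    simp [char2_nsmul_self, char2_zsmul_self]
  set m' : A := ∑ c : Γ ⧸ P, F (Quotient.out c) with hm'def
  have key : ∀ (g : Γ) (c : Γ ⧸ P),
      A.ρ g (F (Quotient.out c)) = F (Quotient.out (g • c)) + F g := by
    intro g c
    have h1 : F (g * c.out) = A.ρ g (F c.out) + F g := hF g c.out
    have hmem : ((g • c).out)⁻¹ * (g * c.out) ∈ P := by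
      rw [← QuotientGroup.eq, QuotientGroup.out_eq']
      rw [show ((g * c.out : Γ) : Γ ⧸ P) = g • (c.out : Γ ⧸ P) from rfl,
        QuotientGroup.out_eq']
    have h2 : F (g * c.out) = F ((g • c).out) := by
      have hdecomp : g * c.out = (g • c).out * (((g • c).out)⁻¹ * (g * c.out)) := by
        group
      rw [hdecomp, hF, hF0 _ hmem, map_zero, zero_add]
    rw [← h2, h1, add_assoc, char2_add_self, add_zero]
  have hsum : ∀ g : Γ, A.ρ g m' = m' + F g := by
    intro g
    rw [hm'def, map_sum]
    rw [Finset.sum_congr rfl fun c _ => key g c, Finset.sum_add_distrib, Finset.sum_const,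
      Finset.card_univ]
    have hbij : ∑ c : Γ ⧸ P, F (Quotient.out (g • c)) = ∑ c : Γ ⧸ P, F (Quotient.out c) :=
      Fintype.sum_bijective (fun c : Γ ⧸ P => (g • c : Γ ⧸ P)) (MulAction.bijective g)
        (fun c : Γ ⧸ P => F (Quotient.out ((g • c : Γ ⧸ P)))) (fun c : Γ ⧸ P => F (Quotient.out c))
        (fun _ => rfl)
    rw [hbij]
    congr 1
    have hcard : Fintype.card (Γ ⧸ P) = P.index := by
      rw [Subgroup.index, Nat.card_eq_fintype_card]
    rw [hcard, char2_odd_nsmul hodd]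
  refine ⟨m' + m₀, fun g => ?_⟩
  have hFg : F g = A.ρ g m' + m' := by
    rw [hsum g, add_right_comm, char2_add_self, zero_add]
  have hfg : f g = F g + (A.ρ g m₀ + m₀) := by
    simp only [hFdef]
    abel_nf
    simp [char2_nsmul_self, char2_zsmul_self]
  rw [hfg, hFg, map_add]
  abel

/-- Any group of exponent 2 and order at most 4 is covered by `{1, g, h, g*h}` for
suitable `g`, `h`. -/
lemma cover {K : Type*} [Group K] [Finite K] (hcard : Nat.card K ≤ 4)
    (hsq : ∀ x : K, x * x = 1) :
    ∃ g h : K, ∀ x : K, x = 1 ∨ x = g ∨ x = h ∨ x = g * h := by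
  classical
  letI := Fintype.ofFinite K
  rw [Nat.card_eq_fintype_card] at hcard
  by_cases h1 : ∀ x : K, x = 1
  · exact ⟨1, 1, fun x => Or.inl (h1 x)⟩
  push_neg at h1; obtain ⟨g, hg⟩ := h1
  by_cases h2 : ∀ x : K, x = 1 ∨ x = g
  · exact ⟨g, g, fun x => (h2 x).imp id Or.inl⟩
  push_neg at h2; obtain ⟨h, hh1, hhg⟩ := h2
  refine ⟨g, h, fun x => ?_⟩
  by_contra hx
  push_neg at hx
  obtain ⟨hx1, hxg, hxh, hxgh⟩ := hx
  have hginv : g⁻¹ = g := inv_eq_of_mul_eq_one_right (hsq g)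
  have hgh1 : g * h ≠ 1 := fun e => hhg ((eq_inv_of_mul_eq_one_right e).trans hginv)
  have hghg : g * h ≠ g := fun e => hh1 (mul_left_cancel (e.trans (mul_one g).symm))
  have hghh : g * h ≠ h := fun e => hg (mul_right_cancel (e.trans (one_mul h).symm))
  have h5 : ({1, g, h, g * h, x} : Finset K).card = 5 := by
    rw [Finset.card_insert_of_notMem (by
      simp only [Finset.mem_insert, Finset.mem_singleton]
      push_neg
      exact ⟨Ne.symm hg, Ne.symm hh1, Ne.symm hgh1, Ne.symm hx1⟩)]
    rw [Finset.card_insert_of_notMem (by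
      simp only [Finset.mem_insert, Finset.mem_singleton]
      push_neg
      exact ⟨Ne.symm hhg, Ne.symm hghg, Ne.symm hxg⟩)]
    rw [Finset.card_insert_of_notMem (by
      simp only [Finset.mem_insert, Finset.mem_singleton]
      push_neg
      exact ⟨Ne.symm hghh, Ne.symm hxh⟩)]
    rw [Finset.card_insert_of_notMem (by
      simp only [Finset.mem_singleton]
      exact Ne.symm hxgh)]
    simp
  have hle := Finset.card_le_univ ({1, g, h, g * h, x} : Finset K)
  rw [h5] at hle
  omega

/- ### The concrete computational core -/

abbrev M2 := Matrix (Fin 2) (Fin 2) (ZMod 2)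

abbrev bigG := GL (Fin 2) (ZMod 2) × GL (Fin 2) (ZMod 2)

lemma invmem : ∀ A : M2, A * A = 1 →
    A ∈ [(1 : M2), !![0,1;1,0], !![1,1;0,1], !![1,0;1,1]] := by decide

set_option maxRecDepth 40000 in
set_option maxHeartbeats 1000000 in
set_option synthInstance.maxHeartbeats 1000000 in
set_option synthInstance.maxSize 4000 in
lemma lemC_list : ∀ A ∈ [(1 : M2), !![0,1;1,0], !![1,1;0,1], !![1,0;1,1]],
    ∀ B ∈ [(1 : M2), !![0,1;1,0], !![1,1;0,1], !![1,0;1,1]],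
    ∀ C ∈ [(1 : M2), !![0,1;1,0], !![1,1;0,1], !![1,0;1,1]],
    ∀ D ∈ [(1 : M2), !![0,1;1,0], !![1,1;0,1], !![1,0;1,1]],
    A*C = C*A → B*D = D*B →
    ∀ v w : M2, (A = 1 ∧ B = 1 → v = 0) → (C = 1 ∧ D = 1 → w = 0) →
      (A = C ∧ B = D → v = w) →
      A*v*B = v → C*w*D = w → A*w*B + v = C*v*D + w →
      ∃ m : M2, v = A*m*B + m ∧ w = C*m*D + m := by decide

lemma lemC {A B C D v w : M2} (hA : A*A=1) (hB : B*B=1) (hC : C*C=1) (hD : D*D=1)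
    (hAC : A*C=C*A) (hBD : B*D=D*B) (h1 : A = 1 ∧ B = 1 → v = 0) (h2 : C = 1 ∧ D = 1 → w = 0)
    (h3 : A = C ∧ B = D → v = w) (hv : A*v*B = v) (hw : C*w*D = w)
    (hmix : A*w*B + v = C*v*D + w) : ∃ m : M2, v = A*m*B + m ∧ w = C*m*D + m :=
  lemC_list A (invmem A hA) B (invmem B hB) C (invmem C hC) D (invmem D hD) hAC hBD v w
    h1 h2 h3 hv hw hmix

/- ### Bridging lemmas -/

lemma coe_sq {G : Subgroup bigG} {x : ↥G} (hx : x * x = 1) : (x : bigG) * (x : bigG) = 1 := by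
  exact_mod_cast congrArg (Subtype.val) hx

lemma sq_fst {G : Subgroup bigG} {x : ↥G} (hx : x * x = 1) :
    ((x : bigG).1 : M2) * ((x : bigG).1 : M2) = 1 := by
  have h := congrArg Prod.fst (coe_sq hx)
  rw [Prod.fst_mul, Prod.fst_one] at h
  have h' := congrArg Units.val h
  rw [Units.val_mul, Units.val_one] at h'
  exact h'

lemma sq_snd {G : Subgroup bigG} {x : ↥G} (hx : x * x = 1) :
    ((x : bigG).2 : M2) * ((x : bigG).2 : M2) = 1 := by
  have h := congrArg Prod.snd (coe_sq hx)
  rw [Prod.snd_mul, Prod.snd_one] at h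
  have h' := congrArg Units.val h
  rw [Units.val_mul, Units.val_one] at h'
  exact h'

lemma rho_apply (G : Subgroup bigG) (x : ↥G) (hx : x * x = 1) (X : M2) :
    (glRep.comp G.subtype) x X = ((x : bigG).1 : M2) * X * ((x : bigG).2 : M2) := by
  have h2 : (x : bigG).2 * (x : bigG).2 = 1 := by
    have h := congrArg Prod.snd (coe_sq hx)
    rw [Prod.snd_mul, Prod.snd_one] at h
    exact h
  have hinv : (x : bigG).2⁻¹ = (x : bigG).2 := inv_eq_of_mul_eq_one_right h2
  show ((x : bigG).1 : M2) * X * (((x : bigG).2⁻¹ : GL (Fin 2) (ZMod 2)) : M2) = _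
  rw [hinv]

lemma eq_one_of_comps {G : Subgroup bigG} {x : ↥G} (h1 : ((x : bigG).1 : M2) = 1)
    (h2 : ((x : bigG).2 : M2) = 1) : x = 1 := by
  apply Subtype.ext
  apply Prod.ext
  · exact Units.ext h1
  · exact Units.ext h2

lemma eq_of_comps {G : Subgroup bigG} {x y : ↥G}
    (h1 : ((x : bigG).1 : M2) = ((y : bigG).1 : M2))
    (h2 : ((x : bigG).2 : M2) = ((y : bigG).2 : M2)) : x = y := by
  apply Subtype.ext
  apply Prod.ext
  · exact Units.ext h1
  · exact Units.ext h2

set_option maxHeartbeats 2000000 in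
/-- For any subgroup `G` of `GL₂(𝔽₂) × GL₂(𝔽₂)` acting on `M₂(𝔽₂)` by
`(A,B)·X = A X B⁻¹`, one has `H¹(G, M₂(𝔽₂)) = 0`. -/
theorem stmt_7 (G : Subgroup (GL (Fin 2) (ZMod 2) × GL (Fin 2) (ZMod 2))) :
    Subsingleton (groupCohomology.H1 (Rep.of (glRep.comp G.subtype))) := by
  classical
  set A : Rep (ZMod 2) ↥G := Rep.of (glRep.comp G.subtype) with hAdef
  suffices H : ∀ x : groupCohomology.H1 A, x = 0 from ⟨fun x y => (H x).trans (H y).symm⟩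
  intro x
  induction x using groupCohomology.H1_induction_on with | h f => ?_
  rw [groupCohomology.H1π_eq_zero_iff]
  suffices hex : ∃ x : A, ∀ g, A.ρ g x - x = f g by
    obtain ⟨x, hx⟩ := hex
    exact ⟨x, funext fun g => by simpa using hx g⟩
  have hρ : ∀ (x : ↥G) (X : M2), x * x = 1 →
      A.ρ x X = ((x : bigG).1 : M2) * X * ((x : bigG).2 : M2) :=
    fun x X hx => rho_apply G x hx X
  have hf : ∀ g h : ↥G, f (g * h) = A.ρ g (f h) + f g :=
    (groupCohomology.mem_cocycles₁_iff (A := A) ⇑f).1 f.2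
  have hf1 : f 1 = (0 : M2) := groupCohomology.cocycles₁_map_one f
  -- cardinality facts
  have cardGL : Nat.card (GL (Fin 2) (ZMod 2)) = 6 := by
    rw [Matrix.card_GL_field]
    decide
  have hpow6 : ∀ x : ↥G, x ^ 6 = 1 := by
    intro x
    apply Subtype.ext
    rw [SubgroupClass.coe_pow, OneMemClass.coe_one]
    apply Prod.ext
    · rw [Prod.pow_fst, Prod.fst_one, ← cardGL]
      exact pow_card_eq_one'
    · rw [Prod.pow_snd, Prod.snd_one, ← cardGL]
      exact pow_card_eq_one'
  -- a Sylow 2-subgroup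
  obtain ⟨P⟩ : Nonempty (Sylow 2 ↥G) := Sylow.nonempty
  have hsq : ∀ x : ↥G, x ∈ (P : Subgroup ↥G) → x * x = 1 := by
    intro x hx
    obtain ⟨k, hk⟩ := P.2 ⟨x, hx⟩
    have hk' : x ^ 2 ^ k = 1 := by
      have := congrArg (Subtype.val) hk
      rw [SubgroupClass.coe_pow, OneMemClass.coe_one] at this
      exact this
    have h1 : orderOf x ∣ 2 ^ k := orderOf_dvd_of_pow_eq_one hk'
    have h2 : orderOf x ∣ 6 := orderOf_dvd_of_pow_eq_one (hpow6 x)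
    have h3 : orderOf x ∣ 2 := by
      obtain ⟨j, _, hje⟩ := (Nat.dvd_prime_pow Nat.prime_two).1 h1
      rw [hje] at h2 ⊢
      have hj1 : j ≤ 1 := by
        by_contra hc
        push_neg at hc
        have h4 : (4 : ℕ) ∣ 2 ^ j := by
          calc (4 : ℕ) = 2 ^ 2 := by norm_num
          _ ∣ 2 ^ j := pow_dvd_pow 2 hc
        have : (4 : ℕ) ∣ 6 := h4.trans h2
        norm_num at this
      calc (2:ℕ) ^ j ∣ 2 ^ 1 := pow_dvd_pow 2 hj1
      _ = 2 := by norm_num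
    rw [← pow_two]
    exact orderOf_dvd_iff_pow_eq_one.1 h3
  have hodd : Odd (P : Subgroup ↥G).index := by
    have hnd := P.not_dvd_index
    rcases Nat.even_or_odd (P : Subgroup ↥G).index with he | ho
    · exact absurd he.two_dvd hnd
    · exact ho
  have hcard4 : Nat.card ↥(P : Subgroup ↥G) ≤ 4 := by
    obtain ⟨n, hn⟩ := P.2.exists_card_eq
    have hd1 : Nat.card ↥(P : Subgroup ↥G) ∣ Nat.card ↥G :=
      Subgroup.card_subgroup_dvd_card (P : Subgroup ↥G)
    have hd2 : Nat.card ↥G ∣ Nat.card bigG := Subgroup.card_subgroup_dvd_card G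
    have hcb : Nat.card bigG = 36 := by
      rw [Nat.card_prod, cardGL]
    have h36 : (2 : ℕ) ^ n ∣ 36 := by
      rw [← hn, ← hcb]
      exact hd1.trans hd2
    have hn2 : n ≤ 2 := by
      by_contra hc
      push_neg at hc
      have h8 : (8 : ℕ) ∣ 2 ^ n := by
        calc (8 : ℕ) = 2 ^ 3 := by norm_num
        _ ∣ 2 ^ n := pow_dvd_pow 2 hc
      have : (8 : ℕ) ∣ 36 := h8.trans h36
      norm_num at this
    rw [hn]
    calc (2:ℕ) ^ n ≤ 2 ^ 2 := Nat.pow_le_pow_right (by norm_num) hn2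
    _ = 4 := by norm_num
  -- generators of the Sylow subgroup
  have hsqK : ∀ x : ↥(P : Subgroup ↥G), x * x = 1 := fun x => Subtype.ext (hsq x.1 x.2)
  obtain ⟨g₀, h₀, hcov₀⟩ := cover hcard4 hsqK
  set g : ↥G := (g₀ : ↥G) with hgdef
  set h : ↥G := (h₀ : ↥G) with hhdef
  have hgP : g ∈ (P : Subgroup ↥G) := g₀.2
  have hhP : h ∈ (P : Subgroup ↥G) := h₀.2
  have hcov : ∀ x ∈ (P : Subgroup ↥G), x = 1 ∨ x = g ∨ x = h ∨ x = g * h := by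
    intro x hx
    rcases hcov₀ ⟨x, hx⟩ with h' | h' | h' | h'
    · exact Or.inl (congrArg Subtype.val h')
    · exact Or.inr (Or.inl (congrArg Subtype.val h'))
    · exact Or.inr (Or.inr (Or.inl (congrArg Subtype.val h')))
    · exact Or.inr (Or.inr (Or.inr (congrArg Subtype.val h')))
  have hg2 : g * g = 1 := hsq g hgP
  have hh2 : h * h = 1 := hsq h hhP
  have hgh2 : (g * h) * (g * h) = 1 := hsq _ (mul_mem hgP hhP)
  have hcomm : g * h = h * g := by
    have hginv : g⁻¹ = g := inv_eq_of_mul_eq_one_right hg2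
    have hhinv : h⁻¹ = h := inv_eq_of_mul_eq_one_right hh2
    have := inv_eq_of_mul_eq_one_right hgh2
    rw [_root_.mul_inv_rev, hginv, hhinv] at this
    exact this.symm
  -- matrix data
  set a : M2 := ((g : bigG).1 : M2) with hadef
  set b : M2 := ((g : bigG).2 : M2) with hbdef
  set c : M2 := ((h : bigG).1 : M2) with hcdef
  set d : M2 := ((h : bigG).2 : M2) with hddef
  obtain ⟨v, hvdef⟩ : ∃ v : M2, f g = v := ⟨f g, rfl⟩
  obtain ⟨w, hwdef⟩ : ∃ w : M2, f h = w := ⟨f h, rfl⟩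
  have hA2 : a * a = 1 := sq_fst hg2
  have hB2 : b * b = 1 := sq_snd hg2
  have hC2 : c * c = 1 := sq_fst hh2
  have hD2 : d * d = 1 := sq_snd hh2
  have hcoe : (g : bigG) * (h : bigG) = (h : bigG) * (g : bigG) := by
    have := congrArg Subtype.val hcomm
    rw [Subgroup.coe_mul, Subgroup.coe_mul] at this
    exact this
  have hAC : a * c = c * a := by
    have h1 := congrArg Prod.fst hcoe
    rw [Prod.fst_mul, Prod.fst_mul] at h1
    have h2 := congrArg Units.val h1
    rw [Units.val_mul, Units.val_mul] at h2
    exact h2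
  have hBD : b * d = d * b := by
    have h1 := congrArg Prod.snd hcoe
    rw [Prod.snd_mul, Prod.snd_mul] at h1
    have h2 := congrArg Units.val h1
    rw [Units.val_mul, Units.val_mul] at h2
    exact h2
  have hρg : ∀ X : M2, A.ρ g X = a * X * b := fun X => hρ g X hg2
  have hρh : ∀ X : M2, A.ρ h X = c * X * d := fun X => hρ h X hh2
  have hdeg1 : a = 1 ∧ b = 1 → v = 0 := by
    rintro ⟨ha, hb⟩
    rw [← hvdef, eq_one_of_comps (hadef.symm.trans ha) (hbdef.symm.trans hb)]
    exact hf1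
  have hdeg2 : c = 1 ∧ d = 1 → w = 0 := by
    rintro ⟨hc', hd'⟩
    rw [← hwdef, eq_one_of_comps (hcdef.symm.trans hc') (hddef.symm.trans hd')]
    exact hf1
  have hdeg3 : a = c ∧ b = d → v = w := by
    rintro ⟨h1', h2'⟩
    rw [← hvdef, ← hwdef,
      eq_of_comps (hadef.symm.trans (h1'.trans hcdef)) (hbdef.symm.trans (h2'.trans hddef))]
  have hv : a * v * b = v := by
    have h0 := hf g g
    rw [hg2, hf1, hvdef] at h0
    have h1 := char2_eq_of_add_eq_zero h0.symm
    rw [hρg v] at h1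
    exact h1
  have hw : c * w * d = w := by
    have h0 := hf h h
    rw [hh2, hf1, hwdef] at h0
    have h1 := char2_eq_of_add_eq_zero h0.symm
    rw [hρh w] at h1
    exact h1
  have hmix : a * w * b + v = c * v * d + w := by
    have h1 := hf g h
    have h2 := hf h g
    rw [← hcomm] at h2
    have h3 := h1.symm.trans h2
    rw [hvdef, hwdef, hρg w, hρh v] at h3
    exact h3
  obtain ⟨m₁, hm₁v, hm₁w⟩ := lemC hA2 hB2 hC2 hD2 hAC hBD hdeg1 hdeg2 hdeg3 hv hw hmix
  -- the cocycle is a coboundary on the Sylow subgroup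
  have hρg' : ∀ X : M2, (glRep.comp G.subtype) g X = a * X * b := fun X => hρg X
  have hρh' : ∀ X : M2, (glRep.comp G.subtype) h X = c * X * d := fun X => hρh X
  have hP : ∀ p ∈ (P : Subgroup ↥G), (f p : M2) = (glRep.comp G.subtype) p m₁ + m₁ := by
    intro p hp
    rcases hcov p hp with h' | h' | h' | h'
    · rw [h', hf1, _root_.map_one]
      show (0 : M2) = m₁ + m₁
      rw [char2_add_self]
    · rw [h', hvdef, hρg' m₁, ← hm₁v]
    · rw [h', hwdef, hρh' m₁, ← hm₁w]
    · rw [h', hf g h, hvdef, hwdef, _root_.map_mul, Module.End.mul_apply, hρh' m₁,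
        hρg' ((c * m₁ * d : M2)), hρg w, hm₁v, hm₁w, Matrix.mul_add, Matrix.add_mul]
      abel_nf
      simp [char2_nsmul_self, char2_zsmul_self]
      rw [two_mul, char2_add_self]
  obtain ⟨m, hm⟩ := cores A (P : Subgroup ↥G) hodd ⇑f hf m₁ hP
  exact ⟨m, fun x => by rw [char2_sub, ← hm x]⟩
end

section
/- Let W be a 4-dimensional 𝔽₂-vector space with a 2-dimensional subspace V₁, set V₂ = W/V₁, and let G be a finite group acting linearly on W preserving V₁, so that G acts on V₁ and V₂. Suppose the induced homomorphism from the image G_W of G in GL(W) to GL(V₁) × GL(V₂) is injective. Then the extension of 𝔽₂[G]-modules 0 → V₁ → W → V₂ → 0 splits. -/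
open LinearMap

set_option maxRecDepth 100000
set_option synthInstance.maxHeartbeats 1000000
set_option synthInstance.maxSize 2000


private lemma mcomm {M : Type*} [Monoid M] {x y : M} (hx : x*x = 1) (hy : y*y = 1)
    (hxy : (x*y)*(x*y) = 1) : x*y = y*x := by
  have : y * x = (x*x) * (y*x) * (y*y) := by rw [hx, hy, one_mul, mul_one]
  rw [this, show (x*x) * (y*x) * (y*y) = x*((x*y)*(x*y))*y by simp [mul_assoc], hxy,
    mul_one]

set_option synthInstance.maxHeartbeats 1000000 in
set_option synthInstance.maxSize 2000 in
private lemma lemD : ∀ m : Matrix (Fin 2) (Fin 2) (ZMod 2), m*m*m*m = 1 → m*m = 1 := by decide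

private lemma lemD' : ∀ (k : ℕ) (m : Matrix (Fin 2) (Fin 2) (ZMod 2)), m^(2^k) = 1 → m*m = 1 := by
  intro k
  induction k with
  | zero => intro m hm; simp [pow_one] at hm; rw [hm]; simp
  | succ k ih =>
    intro m hm
    have h2 : (m*m)^(2^k) = 1 := by
      rw [← pow_two, ← pow_mul]
      rw [show 2 * 2^k = 2^(k+1) by ring]
      exact hm
    have := ih (m*m) h2
    exact lemD m (by rw [show m*m*m*m = (m*m)*(m*m) by rw [mul_assoc]]; exact this)

set_option maxHeartbeats 4000000 in
private lemma lemA : ∀ a b m : Matrix (Fin 2) (Fin 2) (ZMod 2), a*a = 1 → b*b = 1 →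
    ¬(a = 1 ∧ b = 1) → a*m*b = m → ∃ x : Matrix (Fin 2) (Fin 2) (ZMod 2), m = x + a*x*b := by
  decide

private lemma lemA' {V₁ V₂ : Type*} [AddCommGroup V₁] [Module (ZMod 2) V₁]
    [AddCommGroup V₂] [Module (ZMod 2) V₂]
    (b₁ : Module.Basis (Fin 2) (ZMod 2) V₁) (b₂ : Module.Basis (Fin 2) (ZMod 2) V₂)
    (A : V₁ →ₗ[ZMod 2] V₁) (B : V₂ →ₗ[ZMod 2] V₂)
    (hA : A ∘ₗ A = LinearMap.id) (hB : B ∘ₗ B = LinearMap.id)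
    (hne : ¬(A = LinearMap.id ∧ B = LinearMap.id))
    (c : V₂ →ₗ[ZMod 2] V₁) (hc : A ∘ₗ c ∘ₗ B = c) :
    ∃ h : V₂ →ₗ[ZMod 2] V₁, c = h + A ∘ₗ h ∘ₗ B := by
  have hAm : toMatrix b₁ b₁ A * toMatrix b₁ b₁ A = 1 := by
    rw [← toMatrix_comp b₁ b₁ b₁, hA, toMatrix_id]
  have hBm : toMatrix b₂ b₂ B * toMatrix b₂ b₂ B = 1 := by
    rw [← toMatrix_comp b₂ b₂ b₂, hB, toMatrix_id]
  have hnem : ¬(toMatrix b₁ b₁ A = 1 ∧ toMatrix b₂ b₂ B = 1) := by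
    rintro ⟨h1, h2⟩
    exact hne ⟨(toMatrix b₁ b₁).injective (by rw [h1, toMatrix_id]),
      (toMatrix b₂ b₂).injective (by rw [h2, toMatrix_id])⟩
  have hcm : toMatrix b₁ b₁ A * toMatrix b₂ b₁ c * toMatrix b₂ b₂ B = toMatrix b₂ b₁ c := by
    rw [mul_assoc, ← toMatrix_comp b₂ b₂ b₁ c B, ← toMatrix_comp b₂ b₁ b₁ A (c ∘ₗ B), hc]
  obtain ⟨x, hx⟩ := lemA _ _ _ hAm hBm hnem hcm
  refine ⟨(toMatrix b₂ b₁).symm x, ?_⟩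
  apply (toMatrix b₂ b₁).injective
  rw [map_add, toMatrix_comp b₂ b₁ b₁, toMatrix_comp b₂ b₂ b₁,
    LinearEquiv.apply_symm_apply, hx, mul_assoc]
set_option maxHeartbeats 16000000 in
private lemma lemB : ∀ a1 b1 a2 b2 : Matrix (Fin 2) (Fin 2) (ZMod 2), a1*a1 = 1 → b1*b1 = 1 →
    a2*a2 = 1 → b2*b2 = 1 → a1*a2 = a2*a1 → b1*b2 = b2*b1 →
    ¬(a1 = 1 ∧ b1 = 1) → ¬(a2 = 1 ∧ b2 = 1) → ¬(a1 = a2 ∧ b1 = b2) →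
    ∀ m : Matrix (Fin 2) (Fin 2) (ZMod 2), a1*m*b1 = m → a2*m*b2 = m →
    ∃ x : Matrix (Fin 2) (Fin 2) (ZMod 2), a1*x*b1 = x ∧ m = x + a2*x*b2 := by decide

private lemma lemB' {V₁ V₂ : Type*} [AddCommGroup V₁] [Module (ZMod 2) V₁]
    [AddCommGroup V₂] [Module (ZMod 2) V₂]
    (b₁ : Module.Basis (Fin 2) (ZMod 2) V₁) (b₂ : Module.Basis (Fin 2) (ZMod 2) V₂)
    (A₁ A₂ : V₁ →ₗ[ZMod 2] V₁) (B₁ B₂ : V₂ →ₗ[ZMod 2] V₂)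
    (hA1 : A₁ ∘ₗ A₁ = LinearMap.id) (hB1 : B₁ ∘ₗ B₁ = LinearMap.id)
    (hA2 : A₂ ∘ₗ A₂ = LinearMap.id) (hB2 : B₂ ∘ₗ B₂ = LinearMap.id)
    (hAc : A₁ ∘ₗ A₂ = A₂ ∘ₗ A₁) (hBc : B₁ ∘ₗ B₂ = B₂ ∘ₗ B₁)
    (hne1 : ¬(A₁ = LinearMap.id ∧ B₁ = LinearMap.id))
    (hne2 : ¬(A₂ = LinearMap.id ∧ B₂ = LinearMap.id))
    (hne12 : ¬(A₁ = A₂ ∧ B₁ = B₂))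
    (c : V₂ →ₗ[ZMod 2] V₁) (hc1 : A₁ ∘ₗ c ∘ₗ B₁ = c) (hc2 : A₂ ∘ₗ c ∘ₗ B₂ = c) :
    ∃ h : V₂ →ₗ[ZMod 2] V₁, A₁ ∘ₗ h ∘ₗ B₁ = h ∧ c = h + A₂ ∘ₗ h ∘ₗ B₂ := by
  have sq : ∀ (A : V₁ →ₗ[ZMod 2] V₁), A ∘ₗ A = LinearMap.id →
      toMatrix b₁ b₁ A * toMatrix b₁ b₁ A = 1 := fun A hA => by
    rw [← toMatrix_comp b₁ b₁ b₁, hA, toMatrix_id]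
  have sq2 : ∀ (B : V₂ →ₗ[ZMod 2] V₂), B ∘ₗ B = LinearMap.id →
      toMatrix b₂ b₂ B * toMatrix b₂ b₂ B = 1 := fun B hB => by
    rw [← toMatrix_comp b₂ b₂ b₂, hB, toMatrix_id]
  have hco : ∀ (c : V₂ →ₗ[ZMod 2] V₁) (A : V₁ →ₗ[ZMod 2] V₁) (B : V₂ →ₗ[ZMod 2] V₂),
      toMatrix b₂ b₁ (A ∘ₗ c ∘ₗ B) = toMatrix b₁ b₁ A * toMatrix b₂ b₁ c * toMatrix b₂ b₂ B := by
    intro c A B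
    rw [mul_assoc, ← toMatrix_comp b₂ b₂ b₁ c B, ← toMatrix_comp b₂ b₁ b₁ A (c ∘ₗ B)]
  have hinj1 : ∀ (X Y : V₁ →ₗ[ZMod 2] V₁), toMatrix b₁ b₁ X = toMatrix b₁ b₁ Y → X = Y :=
    fun X Y h => (toMatrix b₁ b₁).injective h
  obtain ⟨x, hx1, hx2⟩ := lemB (toMatrix b₁ b₁ A₁) (toMatrix b₂ b₂ B₁) (toMatrix b₁ b₁ A₂)
    (toMatrix b₂ b₂ B₂) (sq _ hA1) (sq2 _ hB1) (sq _ hA2) (sq2 _ hB2)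
    (by rw [← toMatrix_comp b₁ b₁ b₁, ← toMatrix_comp b₁ b₁ b₁, hAc])
    (by rw [← toMatrix_comp b₂ b₂ b₂, ← toMatrix_comp b₂ b₂ b₂, hBc])
    (by rintro ⟨h1, h2⟩; exact hne1 ⟨(toMatrix b₁ b₁).injective (by rw [h1, toMatrix_id]),
      (toMatrix b₂ b₂).injective (by rw [h2, toMatrix_id])⟩)
    (by rintro ⟨h1, h2⟩; exact hne2 ⟨(toMatrix b₁ b₁).injective (by rw [h1, toMatrix_id]),
      (toMatrix b₂ b₂).injective (by rw [h2, toMatrix_id])⟩)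
    (by rintro ⟨h1, h2⟩; exact hne12 ⟨(toMatrix b₁ b₁).injective h1,
      (toMatrix b₂ b₂).injective h2⟩)
    (toMatrix b₂ b₁ c) (by rw [← hco, hc1]) (by rw [← hco, hc2])
  refine ⟨(toMatrix b₂ b₁).symm x, ?_, ?_⟩
  · apply (toMatrix b₂ b₁).injective
    rw [hco, LinearEquiv.apply_symm_apply, hx1]
  · apply (toMatrix b₂ b₁).injective
    rw [map_add, hco, LinearEquiv.apply_symm_apply, hx2]

set_option maxHeartbeats 16000000 in
private lemma lemC_s11 : ∀ a1 : Matrix (Fin 2) (Fin 2) (ZMod 2), a1*a1 = 1 →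
    ∀ b1 : Matrix (Fin 2) (Fin 2) (ZMod 2), b1*b1 = 1 →
    ∀ a2 : Matrix (Fin 2) (Fin 2) (ZMod 2), a2*a2 = 1 → a1*a2 = a2*a1 →
    ∀ b2 : Matrix (Fin 2) (Fin 2) (ZMod 2), b2*b2 = 1 → b1*b2 = b2*b1 →
    ¬(a1 = 1 ∧ b1 = 1) → ¬(a2 = 1 ∧ b2 = 1) → ¬(a1 = a2 ∧ b1 = b2) →
    ∀ a : Matrix (Fin 2) (Fin 2) (ZMod 2), a*a = 1 → a*a1 = a1*a → a*a2 = a2*a →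
    ∀ b : Matrix (Fin 2) (Fin 2) (ZMod 2), b*b = 1 → b*b1 = b1*b → b*b2 = b2*b →
    (a = 1 ∧ b = 1) ∨ (a = a1 ∧ b = b1) ∨ (a = a2 ∧ b = b2) ∨ (a = a1*a2 ∧ b = b1*b2) := by
  decide


open LinearMap Submodule

/-- Let `W` be a 4-dimensional `𝔽₂`-vector space, `V₁ ⊆ W` a 2-dimensional subspace, and
`G` a finite group acting linearly on `W` preserving `V₁` (hence acting on `V₁` and on
`V₂ = W/V₁`).  If the induced map from the image of `G` in `GL(W)` to `GL(V₁) × GL(V₂)`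
is injective (i.e. any `g` acting trivially on both `V₁` and `W/V₁` acts trivially on `W`),
then the extension `0 → V₁ → W → V₂ → 0` of `𝔽₂[G]`-modules splits: `V₁` has a
`G`-invariant complement in `W`. -/
theorem stmt_11 (G : Type*) [Group G] [Finite G]
    (W : Type*) [AddCommGroup W] [Module (ZMod 2) W]
    (hW : Module.finrank (ZMod 2) W = 4)
    (ρ : Representation (ZMod 2) G W)
    (V₁ : Submodule (ZMod 2) W) (hV₁ : Module.finrank (ZMod 2) V₁ = 2)
    (hpres : ∀ (g : G), ∀ x ∈ V₁, ρ g x ∈ V₁)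
    (hinj : ∀ g : G, (∀ x ∈ V₁, ρ g x = x) → (∀ x : W, ρ g x - x ∈ V₁) →
      ρ g = LinearMap.id) :
    ∃ U : Submodule (ZMod 2) W, (∀ (g : G), ∀ x ∈ U, ρ g x ∈ U) ∧ IsCompl V₁ U := by
  classical
  haveI : Fintype G := Fintype.ofFinite G
  haveI hWfin : Module.Finite (ZMod 2) W :=
    Module.finite_of_finrank_pos (by rw [hW]; norm_num)
  -- char two facts
  have h2W : ∀ x : W, x + x = 0 := by
    intro x
    calc x + x = (1 : ZMod 2) • x + (1 : ZMod 2) • x := by rw [one_smul]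
    _ = ((1 + 1 : ZMod 2)) • x := (add_smul _ _ _).symm
    _ = (0 : ZMod 2) • x := by rw [show (1 + 1 : ZMod 2) = 0 by decide]
    _ = 0 := zero_smul _ _
  have h2E : ∀ f : Module.End (ZMod 2) W, f + f = 0 := by
    intro f; ext x; simp [h2W (f x)]
  -- bases
  have hQ2 : Module.finrank (ZMod 2) (W ⧸ V₁) = 2 := by
    have := Submodule.finrank_quotient_add_finrank V₁
    omega
  let b1 : Module.Basis (Fin 2) (ZMod 2) V₁ := Module.finBasisOfFinrankEq (ZMod 2) V₁ hV₁
  let b2 : Module.Basis (Fin 2) (ZMod 2) (W ⧸ V₁) := Module.finBasisOfFinrankEq (ZMod 2) (W ⧸ V₁) hQ2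
  -- induced actions
  have hpres' : ∀ g : G, V₁ ≤ V₁.comap (ρ g) := fun g x hx => hpres g x hx
  set Ar : G → Module.End (ZMod 2) V₁ := fun g => (ρ g).restrict (hpres g) with hAr
  set Br : G → Module.End (ZMod 2) (W ⧸ V₁) := fun g => V₁.mapQ V₁ (ρ g) (hpres' g) with hBr
  -- multiplicativity
  have hArmul : ∀ g h : G, Ar (g * h) = Ar g ∘ₗ Ar h := by
    intro g h
    ext x
    simp only [hAr, comp_apply, LinearMap.restrict_coe_apply, map_mul]
    rfl
  have hBrmul : ∀ g h : G, Br (g * h) = Br g ∘ₗ Br h := by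
    intro g h
    refine Submodule.linearMap_qext _ ?_
    ext x
    simp only [hBr, comp_apply, Submodule.mkQ_apply, Submodule.mapQ_apply, map_mul]
    rfl
  have hArone : Ar 1 = LinearMap.id := by
    ext x; simp only [hAr, LinearMap.restrict_coe_apply, map_one]; rfl
  have hBrone : Br 1 = LinearMap.id := by
    refine Submodule.linearMap_qext _ ?_
    ext x
    simp only [hBr, comp_apply, Submodule.mkQ_apply, Submodule.mapQ_apply, map_one]
    rfl
  -- matrix versions
  set Am : G → Matrix (Fin 2) (Fin 2) (ZMod 2) := fun g => LinearMap.toMatrix b1 b1 (Ar g)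
    with hAm
  set Bm : G → Matrix (Fin 2) (Fin 2) (ZMod 2) := fun g => LinearMap.toMatrix b2 b2 (Br g)
    with hBm
  have hAmmul : ∀ g h : G, Am (g * h) = Am g * Am h := by
    intro g h; rw [hAm]; simp only; rw [hArmul, toMatrix_comp b1 b1 b1]
  have hBmmul : ∀ g h : G, Bm (g * h) = Bm g * Bm h := by
    intro g h; rw [hBm]; simp only; rw [hBrmul, toMatrix_comp b2 b2 b2]
  have hAmone : Am 1 = 1 := by rw [hAm]; simp only; rw [hArone, toMatrix_id]
  have hBmone : Bm 1 = 1 := by rw [hBm]; simp only; rw [hBrone, toMatrix_id]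
  have hAmpow : ∀ (g : G) (n : ℕ), Am (g ^ n) = (Am g) ^ n := by
    intro g n
    induction n with
    | zero => rw [pow_zero, pow_zero, hAmone]
    | succ n ih => rw [pow_succ, pow_succ, hAmmul, ih]
  have hBmpow : ∀ (g : G) (n : ℕ), Bm (g ^ n) = (Bm g) ^ n := by
    intro g n
    induction n with
    | zero => rw [pow_zero, pow_zero, hBmone]
    | succ n ih => rw [pow_succ, pow_succ, hBmmul, ih]
  -- triviality detection
  have htriv : ∀ g : G, Am g = 1 → Bm g = 1 → ρ g = LinearMap.id := by
    intro g hA hB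
    have hArid : Ar g = LinearMap.id := by
      apply (LinearMap.toMatrix b1 b1).injective
      rw [toMatrix_id]; exact hA
    have hBrid : Br g = LinearMap.id := by
      apply (LinearMap.toMatrix b2 b2).injective
      rw [toMatrix_id]; exact hB
    apply hinj g
    · intro x hx
      have := congrArg (fun f : Module.End (ZMod 2) V₁ => (f ⟨x, hx⟩ : W)) hArid
      simpa [hAr] using this
    · intro x
      rw [← Submodule.Quotient.eq]
      have := congrArg (fun f : Module.End (ZMod 2) (W ⧸ V₁) => f (V₁.mkQ x)) hBrid
      simp only [hBr, Submodule.mkQ_apply, Submodule.mapQ_apply, LinearMap.id_apply] at this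
      exact this
  have heq : ∀ g h : G, Am g = Am h → Bm g = Bm h → ρ g = ρ h := by
    intro g h h1 h2
    have hA1 : Am (h⁻¹ * g) = 1 := by
      rw [hAmmul, h1, ← hAmmul, inv_mul_cancel, hAmone]
    have hB1 : Bm (h⁻¹ * g) = 1 := by
      rw [hBmmul, h2, ← hBmmul, inv_mul_cancel, hBmone]
    have := htriv _ hA1 hB1
    calc ρ g = ρ (h * (h⁻¹ * g)) := by rw [mul_inv_cancel_left]
    _ = ρ h * ρ (h⁻¹ * g) := map_mul ρ _ _
    _ = ρ h := by rw [this]; ext x; rfl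
  -- Sylow subgroup
  haveI : Fact (Nat.Prime 2) := ⟨Nat.prime_two⟩
  obtain ⟨S⟩ : Nonempty (Sylow 2 G) := inferInstance
  have hS2 : ∀ s ∈ (S : Subgroup G), ∃ k : ℕ, s ^ (2 ^ k) = (1 : G) := by
    intro s hs
    obtain ⟨k, hk⟩ := S.isPGroup' ⟨s, hs⟩
    exact ⟨k, by simpa [← SubgroupClass.coe_pow] using congrArg (Subtype.val) hk⟩
  have hA2 : ∀ s ∈ (S : Subgroup G), Am s * Am s = 1 := by
    intro s hs
    obtain ⟨k, hk⟩ := hS2 s hs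
    exact lemD' k _ (by rw [← hAmpow, hk, hAmone])
  have hB2 : ∀ s ∈ (S : Subgroup G), Bm s * Bm s = 1 := by
    intro s hs
    obtain ⟨k, hk⟩ := hS2 s hs
    exact lemD' k _ (by rw [← hBmpow, hk, hBmone])
  have hrho2 : ∀ s ∈ (S : Subgroup G), ρ s * ρ s = 1 := by
    intro s hs
    have h1 : Am (s * s) = 1 := by rw [hAmmul]; exact hA2 s hs
    have h2 : Bm (s * s) = 1 := by rw [hBmmul]; exact hB2 s hs
    have := htriv _ h1 h2
    rw [← map_mul, this]; ext x; rfl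
  -- ι machinery
  set ι : ((W ⧸ V₁) →ₗ[ZMod 2] V₁) → Module.End (ZMod 2) W :=
    fun f => V₁.subtype ∘ₗ f ∘ₗ V₁.mkQ with hι
  have hι_mem : ∀ f x, ι f x ∈ V₁ := fun f x => (f (V₁.mkQ x)).2
  have hι_zero : ∀ f, ∀ x ∈ V₁, ι f x = 0 := by
    intro f x hx
    show (V₁.subtype) (f (V₁.mkQ x)) = 0
    rw [Submodule.mkQ_apply, (Submodule.Quotient.mk_eq_zero V₁).2 hx, map_zero, map_zero]
  have hι_inj : Function.Injective ι := by
    intro f f' hff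
    apply Submodule.linearMap_qext
    ext x
    exact congrArg (fun q : Module.End (ZMod 2) W => q x) hff
  have hι_add : ∀ f f', ι (f + f') = ι f + ι f' := by
    intro f f'; ext x; simp [hι]
  have glue : ∀ (g : G) (f : (W ⧸ V₁) →ₗ[ZMod 2] V₁),
      ρ g * ι f * ρ g = ι (Ar g ∘ₗ f ∘ₗ Br g) := by
    intro g f
    ext x
    show ρ g (ι f (ρ g x)) = (V₁.subtype) ((Ar g) (f ((Br g) (V₁.mkQ x))))
    simp only [hAr, hBr, hι, Submodule.mkQ_apply, Submodule.mapQ_apply,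
      LinearMap.restrict_coe_apply, comp_apply, Submodule.coe_subtype]
  -- base projection
  obtain ⟨U₀, hU₀⟩ := Submodule.exists_isCompl V₁
  set p : Module.End (ZMod 2) W := V₁.subtype ∘ₗ (V₁.projectionOnto U₀ hU₀) with hpdef
  have hp1 : ∀ x, p x ∈ V₁ := fun x => (V₁.projectionOnto U₀ hU₀ x).2
  have hp2 : ∀ x ∈ V₁, p x = x := by
    intro x hx
    show (V₁.subtype) (V₁.projectionOnto U₀ hU₀ x) = x
    have : V₁.projectionOnto U₀ hU₀ x = ⟨x, hx⟩ := by
      have := Submodule.projectionOnto_apply_left hU₀ ⟨x, hx⟩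
      simpa using this
    rw [this]
    rfl
  -- helper facts
  have hneg : ∀ f : Module.End (ZMod 2) W, -f = f := fun f =>
    neg_eq_of_add_eq_zero_left (h2E f)
  have hAr2 : ∀ s ∈ (S : Subgroup G), Ar s ∘ₗ Ar s = LinearMap.id := by
    intro s hs
    apply (LinearMap.toMatrix b1 b1).injective
    rw [toMatrix_comp b1 b1 b1, toMatrix_id]
    exact hA2 s hs
  have hBr2 : ∀ s ∈ (S : Subgroup G), Br s ∘ₗ Br s = LinearMap.id := by
    intro s hs
    apply (LinearMap.toMatrix b2 b2).injective
    rw [toMatrix_comp b2 b2 b2, toMatrix_id]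
    exact hB2 s hs
  have hmkne : ∀ s : G, ¬(Am s = 1 ∧ Bm s = 1) →
      ¬(Ar s = LinearMap.id ∧ Br s = LinearMap.id) := by
    rintro s hnt ⟨h1, h2⟩
    refine hnt ⟨?_, ?_⟩
    · show LinearMap.toMatrix b1 b1 (Ar s) = 1
      rw [h1, toMatrix_id]
    · show LinearMap.toMatrix b2 b2 (Br s) = 1
      rw [h2, toMatrix_id]
  have mkbar : ∀ c : Module.End (ZMod 2) W, (∀ x, c x ∈ V₁) → (∀ x ∈ V₁, c x = 0) →
      ∃ cb : (W ⧸ V₁) →ₗ[ZMod 2] V₁, ι cb = c := by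
    intro c hc1 hc2
    refine ⟨V₁.liftQ (c.codRestrict V₁ hc1) ?_, ?_⟩
    · intro x hx
      rw [LinearMap.mem_ker]
      exact Subtype.ext (hc2 x hx)
    · ext x
      rfl
  have fixlem : ∀ (s : G) (cb : (W ⧸ V₁) →ₗ[ZMod 2] V₁),
      ρ s * ι cb * ρ s = ι cb → Ar s ∘ₗ cb ∘ₗ Br s = cb := by
    intro s cb h
    exact hι_inj (by rw [← glue, h])
  -- the cocycle associated to a projection q and an involution s
  have step : ∀ (q : Module.End (ZMod 2) W) (s : G), s ∈ (S : Subgroup G) →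
      (∀ x, q x ∈ V₁) → (∀ x ∈ V₁, q x = x) →
      ∃ cb : (W ⧸ V₁) →ₗ[ZMod 2] V₁, ι cb = q + ρ s * q * ρ s ∧
        Ar s ∘ₗ cb ∘ₗ Br s = cb := by
    intro q s hs hq1 hq2
    have hg : ρ s * ρ s = 1 := hrho2 s hs
    have hc1 : ∀ x, (q + ρ s * q * ρ s) x ∈ V₁ := fun x =>
      V₁.add_mem (hq1 x) (hpres s _ (hq1 _))
    have hc2 : ∀ x ∈ V₁, (q + ρ s * q * ρ s) x = 0 := by
      intro x hx
      have hgx : ρ s x ∈ V₁ := hpres s x hx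
      show q x + (ρ s) (q ((ρ s) x)) = 0
      rw [hq2 x hx, hq2 _ hgx, show (ρ s) ((ρ s) x) = (ρ s * ρ s) x from rfl, hg]
      exact h2W x
    obtain ⟨cb, hcb⟩ := mkbar _ hc1 hc2
    have hcc : ρ s * (q + ρ s * q * ρ s) * ρ s = q + ρ s * q * ρ s := by
      rw [mul_add, add_mul]
      rw [show ρ s * (ρ s * q * ρ s) * ρ s = (ρ s * ρ s) * q * (ρ s * ρ s) by
        simp only [mul_assoc], hg, one_mul, mul_one]
      exact add_comm _ _
    exact ⟨cb, hcb, fixlem s cb (by rw [hcb]; exact hcc)⟩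
  -- wrap-up: from a splitting of the cocycle, modify q to commute with ρ s
  have wrap : ∀ (q : Module.End (ZMod 2) W) (s : G), s ∈ (S : Subgroup G) →
      (∀ x, q x ∈ V₁) → (∀ x ∈ V₁, q x = x) →
      ∀ (cb hb : (W ⧸ V₁) →ₗ[ZMod 2] V₁), ι cb = q + ρ s * q * ρ s →
      cb = hb + Ar s ∘ₗ hb ∘ₗ Br s →
      (∀ x, (q + ι hb) x ∈ V₁) ∧ (∀ x ∈ V₁, (q + ι hb) x = x) ∧
        ρ s * (q + ι hb) = (q + ι hb) * ρ s := by
    intro q s hs hq1 hq2 cb hb hcb hsplit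
    have hg : ρ s * ρ s = 1 := hrho2 s hs
    refine ⟨fun x => V₁.add_mem (hq1 x) (hι_mem hb x), ?_, ?_⟩
    · intro x hx
      show q x + ι hb x = x
      rw [hq2 x hx, hι_zero hb x hx, add_zero]
    · have e1 : ρ s * q * ρ s = ι cb - q := by rw [hcb]; abel
      have e2 : ι (Ar s ∘ₗ hb ∘ₗ Br s) = ι cb - ι hb := by
        rw [hsplit, hι_add]; abel
      have key : ρ s * (q + ι hb) * ρ s = q + ι hb := by
        calc ρ s * (q + ι hb) * ρ s = ρ s * q * ρ s + ρ s * ι hb * ρ s := by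
              rw [mul_add, add_mul]
        _ = (ι cb - q) + (ι cb - ι hb) := by rw [e1, glue, e2]
        _ = (ι cb + ι cb) - (q + ι hb) := by abel
        _ = q + ι hb := by rw [h2E (ι cb), zero_sub, hneg]
      calc ρ s * (q + ι hb) = ρ s * (q + ι hb) * (ρ s * ρ s) := by rw [hg, mul_one]
      _ = (ρ s * (q + ι hb) * ρ s) * ρ s := by simp only [mul_assoc]
      _ = (q + ι hb) * ρ s := by rw [key]
  -- commutation of matrices coming from elements of S
  have hScommA : ∀ s t : G, s ∈ (S : Subgroup G) → t ∈ (S : Subgroup G) →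
      Am s * Am t = Am t * Am s :=
    fun s t hs ht => mcomm (hA2 s hs) (hA2 t ht)
      (by rw [← hAmmul]; exact hA2 _ (mul_mem hs ht))
  have hScommB : ∀ s t : G, s ∈ (S : Subgroup G) → t ∈ (S : Subgroup G) →
      Bm s * Bm t = Bm t * Bm s :=
    fun s t hs ht => mcomm (hB2 s hs) (hB2 t ht)
      (by rw [← hBmmul]; exact hB2 _ (mul_mem hs ht))
  -- construct a projection commuting with all of `ρ s`, `s ∈ S`
  have hq0 : ∃ q0 : Module.End (ZMod 2) W, (∀ x, q0 x ∈ V₁) ∧ (∀ x ∈ V₁, q0 x = x) ∧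
      ∀ s ∈ (S : Subgroup G), ρ s * q0 = q0 * ρ s := by
    by_cases h1 : ∀ s ∈ (S : Subgroup G), Am s = 1 ∧ Bm s = 1
    · refine ⟨p, hp1, hp2, fun s hs => ?_⟩
      have := htriv s (h1 s hs).1 (h1 s hs).2
      rw [this]
      ext x; rfl
    · push_neg at h1
      obtain ⟨s₁, hs₁, hnt₁⟩ := h1
      have hnt₁' : ¬(Am s₁ = 1 ∧ Bm s₁ = 1) := by
        intro h; exact absurd h.2 (hnt₁ h.1)
      -- build q1 commuting with ρ s₁
      obtain ⟨cb, hcb, hcfix⟩ := step p s₁ hs₁ hp1 hp2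
      obtain ⟨hb, hhb⟩ := lemA' b1 b2 (Ar s₁) (Br s₁) (hAr2 s₁ hs₁) (hBr2 s₁ hs₁)
        (hmkne s₁ hnt₁') cb hcfix
      obtain ⟨hq11, hq12, hq13⟩ := wrap p s₁ hs₁ hp1 hp2 cb hb hcb hhb
      set q1 : Module.End (ZMod 2) W := p + ι hb with hq1def
      by_cases h2 : ∀ s ∈ (S : Subgroup G),
          (Am s = 1 ∧ Bm s = 1) ∨ (Am s = Am s₁ ∧ Bm s = Bm s₁)
      · refine ⟨q1, hq11, hq12, fun s hs => ?_⟩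
        rcases h2 s hs with ⟨hA, hB⟩ | ⟨hA, hB⟩
        · rw [htriv s hA hB]
          ext x; rfl
        · rw [heq s s₁ (by rw [hA]) (by rw [hB])]
          exact hq13
      · push_neg at h2
        obtain ⟨s₂, hs₂, hnt₂⟩ := h2
        have hnt₂' : ¬(Am s₂ = 1 ∧ Bm s₂ = 1) := fun h => hnt₂.1 h.1 h.2
        have hne21 : ¬(Am s₂ = Am s₁ ∧ Bm s₂ = Bm s₁) := fun h => hnt₂.2 h.1 h.2
        -- ρ s₁ and ρ s₂ commute
        have hcomm12 : ρ s₁ * ρ s₂ = ρ s₂ * ρ s₁ := by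
          rw [← map_mul, ← map_mul]
          exact heq _ _ (by rw [hAmmul, hAmmul]; exact hScommA s₁ s₂ hs₁ hs₂)
            (by rw [hBmmul, hBmmul]; exact hScommB s₁ s₂ hs₁ hs₂)
        -- cocycle for s₂ relative to q1
        obtain ⟨cb2, hcb2, hcfix2⟩ := step q1 s₂ hs₂ hq11 hq12
        -- it is also fixed by s₁
        have hcfix21 : Ar s₁ ∘ₗ cb2 ∘ₗ Br s₁ = cb2 := by
          apply fixlem
          rw [hcb2]
          have e : ρ s₁ * (q1 + ρ s₂ * q1 * ρ s₂) * ρ s₁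
              = ρ s₁ * q1 * ρ s₁ + ρ s₁ * ρ s₂ * q1 * ρ s₂ * ρ s₁ := by
            rw [mul_add, add_mul]; simp only [mul_assoc]
          rw [e]
          have e1 : ρ s₁ * q1 * ρ s₁ = q1 * (ρ s₁ * ρ s₁) := by
            rw [hq13]; simp only [mul_assoc]
          have e2 : ρ s₁ * ρ s₂ * q1 * ρ s₂ * ρ s₁
              = ρ s₂ * (ρ s₁ * q1 * ρ s₁) * ρ s₂ := by
            rw [hcomm12]
            simp only [mul_assoc]
            rw [hcomm12]
          rw [e1, e2, hrho2 s₁ hs₁, mul_one, e1, hrho2 s₁ hs₁, mul_one]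
        -- split via the rank-4 (free-module) case
        obtain ⟨hb2, hfixb2, hsplit2⟩ := lemB' b1 b2 (Ar s₁) (Ar s₂) (Br s₁) (Br s₂)
          (hAr2 s₁ hs₁) (hBr2 s₁ hs₁) (hAr2 s₂ hs₂) (hBr2 s₂ hs₂)
          (by apply (LinearMap.toMatrix b1 b1).injective
              rw [toMatrix_comp b1 b1 b1, toMatrix_comp b1 b1 b1]
              exact hScommA s₁ s₂ hs₁ hs₂)
          (by apply (LinearMap.toMatrix b2 b2).injective
              rw [toMatrix_comp b2 b2 b2, toMatrix_comp b2 b2 b2]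
              exact hScommB s₁ s₂ hs₁ hs₂)
          (hmkne s₁ hnt₁') (hmkne s₂ hnt₂')
          (by rintro ⟨e1, e2⟩
              exact hne21 ⟨(congrArg (LinearMap.toMatrix b1 b1) e1).symm,
                (congrArg (LinearMap.toMatrix b2 b2) e2).symm⟩)
          cb2 hcfix21 hcfix2
        obtain ⟨hq01, hq02, hq03⟩ := wrap q1 s₂ hs₂ hq11 hq12 cb2 hb2 hcb2 hsplit2
        set q0 : Module.End (ZMod 2) W := q1 + ι hb2 with hq0def
        -- q0 still commutes with ρ s₁
        have hq03' : ρ s₁ * q0 = q0 * ρ s₁ := by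
          have hfix : ρ s₁ * ι hb2 * ρ s₁ = ι hb2 := by rw [glue, hfixb2]
          have : ρ s₁ * ι hb2 = ι hb2 * ρ s₁ := by
            calc ρ s₁ * ι hb2 = ρ s₁ * ι hb2 * (ρ s₁ * ρ s₁) := by
                  rw [hrho2 s₁ hs₁, mul_one]
            _ = (ρ s₁ * ι hb2 * ρ s₁) * ρ s₁ := by simp only [mul_assoc]
            _ = ι hb2 * ρ s₁ := by rw [hfix]
          rw [hq0def, mul_add, add_mul, hq13, this]
        -- now handle an arbitrary element of S
        refine ⟨q0, hq01, hq02, fun s hs => ?_⟩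
        have hcases := lemC_s11 (Am s₁) (hA2 s₁ hs₁) (Bm s₁) (hB2 s₁ hs₁)
          (Am s₂) (hA2 s₂ hs₂) (hScommA s₁ s₂ hs₁ hs₂)
          (Bm s₂) (hB2 s₂ hs₂) (hScommB s₁ s₂ hs₁ hs₂)
          hnt₁' hnt₂' (by rintro ⟨e1, e2⟩; exact hne21 ⟨e1.symm, e2.symm⟩)
          (Am s) (hA2 s hs) (hScommA s s₁ hs hs₁) (hScommA s s₂ hs hs₂)
          (Bm s) (hB2 s hs) (hScommB s s₁ hs hs₁) (hScommB s s₂ hs hs₂)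
        rcases hcases with ⟨hA, hB⟩ | ⟨hA, hB⟩ | ⟨hA, hB⟩ | ⟨hA, hB⟩
        · rw [htriv s hA hB]; ext x; rfl
        · rw [heq s s₁ (by rw [hA]) (by rw [hB])]; exact hq03'
        · rw [heq s s₂ (by rw [hA]) (by rw [hB])]; exact hq03
        · have : ρ s = ρ (s₁ * s₂) := heq s (s₁ * s₂)
            (by rw [hAmmul]; exact hA) (by rw [hBmmul]; exact hB)
          rw [this, map_mul]
          calc ρ s₁ * ρ s₂ * q0 = ρ s₁ * (ρ s₂ * q0) := by rw [mul_assoc]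
          _ = ρ s₁ * (q0 * ρ s₂) := by rw [hq03]
          _ = (ρ s₁ * q0) * ρ s₂ := by rw [mul_assoc]
          _ = q0 * (ρ s₁ * ρ s₂) := by rw [hq03']; simp only [mul_assoc]
  obtain ⟨q0, hq01, hq02, hq03⟩ := hq0
  -- conjugation action of G on End(W)
  have hρinv : ∀ g : G, ρ g * ρ g⁻¹ = 1 := by
    intro g; rw [← map_mul, mul_inv_cancel, map_one]
  have hρinv' : ∀ g : G, ρ g⁻¹ * ρ g = 1 := by
    intro g; rw [← map_mul, inv_mul_cancel, map_one]
  letI : SMul G (Module.End (ZMod 2) W) := ⟨fun g q => ρ g * q * ρ g⁻¹⟩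
  have hsmul : ∀ (g : G) (q : Module.End (ZMod 2) W), g • q = ρ g * q * ρ g⁻¹ :=
    fun _ _ => rfl
  letI : MulAction G (Module.End (ZMod 2) W) :=
    { one_smul := by
        intro q
        rw [hsmul, inv_one, map_one]
        simp
      mul_smul := by
        intro g h q
        rw [hsmul, hsmul, hsmul, map_mul, mul_inv_rev, map_mul]
        simp only [mul_assoc] }
  have hstab : (S : Subgroup G) ≤ MulAction.stabilizer G q0 := by
    intro s hs
    show s • q0 = q0
    rw [hsmul, hq03 s hs, mul_assoc, hρinv, mul_one]
  have hfin : (MulAction.orbit G q0).Finite := Set.finite_range _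
  set T : Finset (Module.End (ZMod 2) W) := hfin.toFinset with hTdef
  -- T has odd cardinality
  have hcard : T.card = (MulAction.stabilizer G q0).index := by
    rw [hTdef, ← Set.ncard_eq_toFinset_card _ hfin, ← Nat.card_coe_set_eq,
      Nat.card_congr (MulAction.orbitEquivQuotientStabilizer G q0)]
    exact (Subgroup.index_eq_card _).symm
  have hTodd : Odd T.card := by
    rw [Nat.odd_iff, ← Nat.not_even_iff]
    intro heven
    have hdvd : (MulAction.stabilizer G q0).index ∣ (S : Subgroup G).index :=
      Subgroup.index_dvd_of_le hstab
    have h2i : 2 ∣ (S : Subgroup G).index := by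
      refine dvd_trans ?_ hdvd
      rw [← hcard]
      exact heven.two_dvd
    exact S.not_dvd_index' (by
      have := Subgroup.index_ne_zero_of_finite (H := (S : Subgroup G).subgroupOf (Subgroup.normalizer ((S : Subgroup G) : Set G)))
      exact this) h2i
  -- properties of elements of T
  have hTprop : ∀ q ∈ T, (∀ x, q x ∈ V₁) ∧ (∀ x ∈ V₁, q x = x) := by
    intro q hq
    rw [hTdef, Set.Finite.mem_toFinset] at hq
    obtain ⟨g, rfl⟩ := hq
    constructor
    · intro x
      show ρ g (q0 (ρ g⁻¹ x)) ∈ V₁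
      exact hpres g _ (hq01 _)
    · intro x hx
      show ρ g (q0 (ρ g⁻¹ x)) = x
      rw [hq02 _ (hpres g⁻¹ x hx)]
      rw [show (ρ g) ((ρ g⁻¹) x) = (ρ g * ρ g⁻¹) x from rfl, hρinv g]
      rfl
  -- the sum over the orbit
  set qs : Module.End (ZMod 2) W := ∑ q ∈ T, q with hqsdef
  have hqs_mem : ∀ x, qs x ∈ V₁ := by
    intro x
    rw [hqsdef, LinearMap.sum_apply]
    exact Submodule.sum_mem V₁ (fun q hq => (hTprop q hq).1 x)
  have hqs_id : ∀ x ∈ V₁, qs x = x := by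
    intro x hx
    rw [hqsdef, LinearMap.sum_apply]
    rw [Finset.sum_congr rfl (fun q hq => (hTprop q hq).2 x hx), Finset.sum_const]
    obtain ⟨k, hk⟩ := hTodd
    rw [hk, add_nsmul, one_nsmul, mul_comm, mul_nsmul, two_nsmul, h2W, zero_add]
  -- invariance of T and qs under conjugation
  have hTim : ∀ g : G, T.image (fun q => g • q) = T := by
    intro g
    ext r
    simp only [Finset.mem_image, hTdef, Set.Finite.mem_toFinset]
    constructor
    · rintro ⟨q, hq, rfl⟩
      rw [← MulAction.smul_orbit g q0]
      exact Set.smul_mem_smul_set hq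
    · intro hr
      refine ⟨g⁻¹ • r, ?_, smul_inv_smul g r⟩
      rw [← MulAction.smul_orbit g⁻¹ q0]
      exact Set.smul_mem_smul_set hr
  have hqs_comm : ∀ g : G, ρ g * qs = qs * ρ g := by
    intro g
    have h1 : ρ g * qs * ρ g⁻¹ = qs := by
      rw [hqsdef, Finset.mul_sum, Finset.sum_mul]
      have : ∀ q ∈ T, ρ g * q * ρ g⁻¹ = g • q := fun q _ => rfl
      rw [Finset.sum_congr rfl this]
      conv_rhs => rw [← hTim g]
      rw [Finset.sum_image (fun a _ b _ h => MulAction.injective g h)]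
    calc ρ g * qs = ρ g * qs * (ρ g⁻¹ * ρ g) := by rw [hρinv' g, mul_one]
    _ = (ρ g * qs * ρ g⁻¹) * ρ g := by simp only [mul_assoc]
    _ = qs * ρ g := by rw [h1]
  -- conclusion
  refine ⟨LinearMap.ker qs, ?_, ?_⟩
  · intro g x hx
    rw [LinearMap.mem_ker] at hx ⊢
    have : qs ((ρ g) x) = (ρ g) (qs x) := by
      rw [show qs ((ρ g) x) = (qs * ρ g) x from rfl, ← hqs_comm g]; rfl
    rw [this, hx, map_zero]
  · constructor
    · rw [disjoint_iff]
      rw [Submodule.eq_bot_iff]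
      rintro x hx
      rw [Submodule.mem_inf] at hx
      have := hqs_id x hx.1
      rw [LinearMap.mem_ker.1 hx.2] at this
      exact this.symm
    · rw [codisjoint_iff, eq_top_iff]
      intro x _
      refine Submodule.mem_sup.2 ⟨qs x, hqs_mem x, x - qs x, ?_, by abel⟩
      rw [LinearMap.mem_ker, map_sub, hqs_id _ (hqs_mem x), sub_self]
end

section
/- Let V be a finite-dimensional vector space over a field F of characteristic 0 with dim V = 4, and let g ∈ GL(V). If the induced map ⋀²g on the exterior square ⋀²V is the identity, then g = id or g = −id. -/
open ExteriorAlgebra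

/-- The wedge of a linearly independent family is nonzero. -/
lemma wedge_ne_zero {F V : Type*} [Field F] [AddCommGroup V] [Module F V]
    {n : ℕ} {u : Fin n → V} (hu : LinearIndependent F u) :
    ExteriorAlgebra.ιMulti F n u ≠ 0 := by
  classical
  set B := Pi.basisFun F (Fin n)
  set j : (Fin n → F) →ₗ[F] V := B.constr F u with hj
  have hjinj : LinearMap.ker j = ⊥ := by
    rw [LinearMap.ker_eq_bot']
    intro x hx
    rw [hj, Module.Basis.constr_apply_fintype] at hx
    simp only [B, Pi.basisFun_equivFun, LinearEquiv.refl_apply] at hx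
    funext i
    exact Fintype.linearIndependent_iff.1 hu x hx i
  obtain ⟨p, hp⟩ := j.exists_leftInverse_of_injective hjinj
  set f : V [⋀^Fin n]→ₗ[F] F := B.det.compLinearMap p with hf
  have hfu : f u = 1 := by
    have hpu : p ∘ u = ⇑B := by
      funext i
      have : u i = j (B i) := (B.constr_basis F u i).symm
      rw [Function.comp_apply, this, ← LinearMap.comp_apply, hp]
      rfl
    rw [hf, AlternatingMap.compLinearMap_apply]
    show B.det (⇑p ∘ u) = 1
    rw [hpu, Module.Basis.det_self]
  intro h0
  have := ExteriorAlgebra.liftAlternating_apply_ιMulti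
    (Function.update (fun i => (0 : V [⋀^Fin i]→ₗ[F] F)) n f) u
  rw [h0, map_zero, Function.update_self] at this
  rw [hfu] at this
  exact one_ne_zero this.symm

/-- Let `V` be a 4-dimensional vector space over a field `F` of characteristic zero and
`g ∈ GL(V)`.  If the induced map `⋀²g` on the exterior square of `V` is the identity,
then `g = id` or `g = -id`. -/
theorem stmt_19 (F V : Type*) [Field F] [CharZero F] [AddCommGroup V] [Module F V]
    (hV : Module.finrank F V = 4) (g : V ≃ₗ[F] V)
    (hg : ∀ x ∈ (⋀[F]^2 V : Submodule F (ExteriorAlgebra F V)),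
      ExteriorAlgebra.map (g : V →ₗ[F] V) x = x) :
    (g : V →ₗ[F] V) = LinearMap.id ∨ (g : V →ₗ[F] V) = -LinearMap.id := by
  classical
  have : FiniteDimensional F V := FiniteDimensional.of_finrank_eq_succ hV
  -- Step 1: the key wedge identity
  have key : ∀ v w : V, ι F (g v) * ι F (g w) = ι F v * ι F w := by
    intro v w
    have hmem : ι F v * ι F w ∈ (⋀[F]^2 V : Submodule F (ExteriorAlgebra F V)) := by
      have h2 : (⋀[F]^2 V : Submodule F (ExteriorAlgebra F V)) =
          LinearMap.range (ι F (M := V)) * LinearMap.range (ι F (M := V)) := sq _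
      rw [h2]
      exact Submodule.mul_mem_mul ⟨v, rfl⟩ ⟨w, rfl⟩
    have := hg _ hmem
    rwa [map_mul, ExteriorAlgebra.map_apply_ι, ExteriorAlgebra.map_apply_ι] at this
  -- ι v * ι w as ιMulti 2
  have pair_eq : ∀ v w : V, ExteriorAlgebra.ιMulti F 2 ![v, w] = ι F v * ι F w := by
    intro v w
    simp [ExteriorAlgebra.ιMulti_apply, List.ofFn_succ]
  have triple_eq : ∀ a b c : V,
      ExteriorAlgebra.ιMulti F 3 ![a, b, c] = ι F a * (ι F b * ι F c) := by
    intro a b c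
    simp [ExteriorAlgebra.ιMulti_apply, List.ofFn_succ, mul_assoc]
  -- Step 2: every vector is an eigenvector
  have eig : ∀ v : V, ∃ c : F, g v = c • v := by
    intro v
    by_cases hv : v = 0
    · exact ⟨0, by simp [hv]⟩
    by_contra hc
    push_neg at hc
    have hgv : g v ≠ 0 := by
      intro h
      exact hv (g.injective (by simpa using h))
    have hpair : LinearIndependent F ![g v, v] := by
      rw [LinearIndependent.pair_iff' hgv]
      intro a ha
      rcases eq_or_ne a 0 with rfl | ha0
      · rw [zero_smul] at ha; exact hv ha.symm
      · exact hc a⁻¹ (by rw [eq_inv_smul_iff₀ ha0]; exact ha)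
    -- pick w outside span {g v, v}
    have hlt : Submodule.span F ({g v, v} : Set V) < ⊤ := by
      have hle : ({g v, v} : Set V).toFinset.card ≤ 2 := by
        rw [Set.toFinset_insert, Set.toFinset_singleton]
        exact (Finset.card_insert_le _ _).trans (by simp)
      have : ({g v, v} : Set V).toFinset.card < Module.finrank F V := by
        rw [hV]; omega
      exact span_lt_top_of_card_lt_finrank this
    obtain ⟨w, hw⟩ : ∃ w, w ∉ Submodule.span F ({g v, v} : Set V) := by
      by_contra hw
      push_neg at hw
      exact hlt.ne (top_unique fun x _ => hw x)
    have htri : LinearIndependent F ![g v, v, w] := by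
      have h1 : LinearIndependent F (Fin.snoc ![g v, v] w : Fin 3 → V) := by
        rw [linearIndependent_fin_snoc]
        constructor
        · exact hpair
        · convert hw using 2
          ext x
          simp [Matrix.range_cons, Matrix.range_empty, Set.pair_comm]
      convert h1 using 1
      funext i
      fin_cases i <;> rfl
    have hzero : ι F (g v) * (ι F v * ι F w) = 0 := by
      rw [← key v w, ← mul_assoc, ExteriorAlgebra.ι_sq_zero, zero_mul]
    exact wedge_ne_zero htri (by rw [triple_eq, hzero])
  -- Step 3: each nonzero vector has eigenvalue ±1
  have pm : ∀ v : V, g v = v ∨ g v = -v := by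
    intro v
    rcases eq_or_ne v 0 with rfl | hv
    · left; simp
    obtain ⟨a, ha⟩ := eig v
    -- pick w outside span {v}
    have hlt : Submodule.span F ({v} : Set V) < ⊤ := by
      apply span_lt_top_of_card_lt_finrank
      rw [Set.toFinset_singleton, hV]
      simp
    obtain ⟨w, hw⟩ : ∃ w, w ∉ Submodule.span F ({v} : Set V) := by
      by_contra hw
      push_neg at hw
      exact hlt.ne (top_unique fun x _ => hw x)
    have hpair : LinearIndependent F ![v, w] := by
      rw [LinearIndependent.pair_iff' hv]
      intro c hc
      exact hw (hc ▸ Submodule.smul_mem _ c (Submodule.mem_span_singleton_self v))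
    obtain ⟨b, hb⟩ := eig w
    obtain ⟨d, hd⟩ := eig (v + w)
    have habd : a - d = 0 ∧ b - d = 0 := by
      apply LinearIndependent.pair_iff.1 hpair
      have h3 : a • v + b • w = d • v + d • w := by
        rw [← smul_add, ← ha, ← hb, ← hd, map_add]
      rw [sub_smul, sub_smul,
        show (a • v - d • v) + (b • w - d • w) = (a • v + b • w) - (d • v + d • w) by abel,
        h3, sub_self]
    have hab : a = b := by
      have h1 : a = d := sub_eq_zero.1 habd.1
      have h2 : b = d := sub_eq_zero.1 habd.2
      rw [h1, h2]
    have hx2 : ι F v * ι F w ≠ 0 := by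
      rw [← pair_eq]
      exact wedge_ne_zero hpair
    have hsq : a * b = 1 := by
      have h1 : (a * b) • (ι F v * ι F w) = ι F v * ι F w := by
        have := key v w
        rw [ha, hb, map_smul, map_smul, smul_mul_assoc, mul_smul_comm, smul_smul] at this
        exact this
      have h2 : (a * b - 1) • (ι F v * ι F w) = 0 := by
        rw [sub_smul, one_smul, h1, sub_self]
      rcases smul_eq_zero.1 h2 with h | h
      · exact sub_eq_zero.1 h
      · exact absurd h hx2
    rw [← hab] at hsq
    rcases mul_self_eq_one_iff.1 hsq with h | h
    · left; rw [ha, h, one_smul]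
    · right; rw [ha, h, neg_smul, one_smul]
  -- Step 4: globalize
  have two_torsion_free : ∀ x : V, x + x = 0 → x = 0 := by
    intro x hx
    have : (2 : F) • x = 0 := by rw [two_smul]; exact hx
    rcases smul_eq_zero.1 this with h | h
    · exact absurd h two_ne_zero
    · exact h
  by_cases hall : ∀ x : V, g x = x
  · left
    ext x
    simpa using hall x
  · right
    push_neg at hall
    obtain ⟨v, hv⟩ := hall
    have hgv : g v = -v := (pm v).resolve_left hv
    have hv0 : v ≠ 0 := by
      intro h
      exact hv (by rw [h, map_zero])
    ext x
    simp only [LinearEquiv.coe_coe, LinearMap.neg_apply, LinearMap.id_coe, id_eq]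
    rcases pm x with hx | hx
    · rcases pm (v + x) with h | h
      · exfalso
        rw [map_add, hgv, hx] at h
        have : v + v = 0 := by linear_combination (norm := abel_nf) - h
        exact hv0 (two_torsion_free v this)
      · rw [map_add, hgv, hx, neg_add] at h
        have hx0 : x + x = 0 := by linear_combination (norm := abel_nf) h
        have : x = 0 := two_torsion_free x hx0
        rw [hx, this, neg_zero]
    · exact hx
end
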